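/- arXiv:0909.2800 — 3 statements merged into one kernel-verified Lean document; each statement's English description precedes it below -/
import Mathlib

section
/- Let 𝕂 be ℝ or ℂ, let 0 ≤ |λ_1|, |λ_2| < 1 with λ_1, λ_2 ∈ 𝕂, and let A_1 = [[0,1],[λ_1,0]], A_2 = [[0,λ_2],[1,0]]. Then the pair 𝒜 = (A_1, A_2) is irreducible, ϱ(𝒜) = 1 = ρ(A_1A_2), the norm ‖(x,y)ᵀ‖ = max{|x|,|y|} is a Barabanov norm for 𝒜 and every Barabanov norm for 𝒜 is a scalar multiple of it, 𝒜 satisfies the strong finiteness hypothesis with characteristic word (1,2), and 𝒜 has the unbounded agreements property and the rank one property. -/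
open Filter Topology

noncomputable section

namespace JSRPaper

variable {𝕂 : Type*} [RCLike 𝕂] {ι : Type*} [Fintype ι] [DecidableEq ι] {r : ℕ}

/-- The Euclidean operator norm of a matrix, i.e. the operator norm induced by the
Euclidean norm on `𝕂^ι`. -/
noncomputable def eNorm (A : Matrix ι ι 𝕂) : ℝ :=
  ‖Matrix.toEuclideanCLM (𝕜 := 𝕂) A‖

/-- The product `A_{i n} ⋯ A_{i 1}` associated to the word `i : Fin n → Fin r`. -/
noncomputable def wordProd (A : Fin r → Matrix ι ι 𝕂) {n : ℕ} (i : Fin n → Fin r) :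
    Matrix ι ι 𝕂 :=
  ((List.ofFn fun k => A (i k)).reverse).prod

/-- The joint spectral radius of the tuple `A`, expressed via the standard
characterisation `ϱ(𝒜) = inf_n max_{|i| = n} ‖A_{i_n} ⋯ A_{i_1}‖^{1/n}`
(the infimum equals the limit). -/
noncomputable def jsr (A : Fin r → Matrix ι ι 𝕂) : ℝ :=
  ⨅ n : ℕ+, (⨆ i : Fin (n : ℕ) → Fin r, eNorm (wordProd A i)) ^ ((n : ℝ)⁻¹)

/-- The spectral radius of a matrix, via Gelfand's formula
`ρ(A) = inf_k ‖A^k‖^{1/k}` (the infimum equals the limit). -/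
noncomputable def specRad (A : Matrix ι ι 𝕂) : ℝ :=
  ⨅ k : ℕ+, eNorm (A ^ (k : ℕ)) ^ (((k : ℕ) : ℝ)⁻¹)

/-- `N` is a norm on `𝕂^ι`. -/
def IsNorm (N : EuclideanSpace 𝕂 ι → ℝ) : Prop :=
  (∀ v, N v = 0 ↔ v = 0) ∧ (∀ (c : 𝕂) (v), N (c • v) = ‖c‖ * N v) ∧
    ∀ u v, N (u + v) ≤ N u + N v

/-- The operator norm of the matrix `A` induced by the norm `N` on `𝕂^ι`. -/
noncomputable def opNormWrt (N : EuclideanSpace 𝕂 ι → ℝ) (A : Matrix ι ι 𝕂) : ℝ :=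
  sSup {x : ℝ | ∃ v, N v ≤ 1 ∧ x = N (Matrix.toEuclideanCLM (𝕜 := 𝕂) A v)}

/-- `N` is a Barabanov norm for the tuple `A` : it is a norm and
`ϱ(𝒜) ‖v‖ = max_i ‖A_i v‖` for every `v`. -/
def IsBarabanov (A : Fin r → Matrix ι ι 𝕂) (N : EuclideanSpace 𝕂 ι → ℝ) : Prop :=
  IsNorm N ∧ ∀ v, jsr A * N v = ⨆ i : Fin r, N (Matrix.toEuclideanCLM (𝕜 := 𝕂) (A i) v)

/-- The tuple `A` is irreducible: no subspace of `𝕂^ι` other than `⊥` and `⊤`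
is invariant under every `A i`. -/
def IsIrreducible (A : Fin r → Matrix ι ι 𝕂) : Prop :=
  ∀ V : Submodule 𝕂 (EuclideanSpace 𝕂 ι),
    (∀ i, ∀ v ∈ V, Matrix.toEuclideanCLM (𝕜 := 𝕂) (A i) v ∈ V) → V = ⊥ ∨ V = ⊤

/-- Two words of length `n` are rotation equivalent if one is a cyclic shift of the other. -/
def RotEquiv {n : ℕ} (z w : Fin n → Fin r) : Prop :=
  ∃ k : ℕ, ∀ j : Fin n, z j = w ⟨(j.val + k) % n, Nat.mod_lt _ j.pos⟩

/-- The tuple `A` satisfies the strong finiteness hypothesis with characteristic word `ω`: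
for every Barabanov norm `N` for `A`, every word of the same length as `ω` which is not
rotation equivalent to `ω` has `N`-operator-norm product strictly less than `ϱ(𝒜)^n`. -/
def StrongFinHyp (A : Fin r → Matrix ι ι 𝕂) {n : ℕ} (ω : Fin n → Fin r) : Prop :=
  ∀ N : EuclideanSpace 𝕂 ι → ℝ, IsBarabanov A N →
    ∀ z : Fin n → Fin r, ¬ RotEquiv z ω → opNormWrt N (wordProd A z) < jsr A ^ n

/-- The tuple `A` is relatively product bounded : `ϱ(𝒜) > 0` and the set of normalised
products `ϱ(𝒜)^{-n} A_{i_n} ⋯ A_{i_1}` is bounded. -/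
def RelProdBounded (A : Fin r → Matrix ι ι 𝕂) : Prop :=
  0 < jsr A ∧ ∃ C : ℝ, ∀ (n : ℕ) (i : Fin n → Fin r), eNorm (wordProd A i) ≤ C * jsr A ^ n

/-- The limit semigroup `𝒮(𝒜) = ⋂_{m ≥ 1} closure (⋃_{n ≥ m} ϱ(𝒜)^{-n} 𝒜_n)`,
written out via the metric characterisation of the closure. -/
def limitSemigroup (A : Fin r → Matrix ι ι 𝕂) : Set (Matrix ι ι 𝕂) :=
  {B | ∀ m : ℕ, ∀ ε > (0 : ℝ), ∃ n : ℕ, m ≤ n ∧ ∃ i : Fin n → Fin r,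
    eNorm ((jsr A ^ n)⁻¹ • wordProd A i - B) < ε}

/-- The tuple `A` has the rank one property: it is relatively product bounded and every
nonzero element of the limit semigroup has rank one. -/
def RankOneProp (A : Fin r → Matrix ι ι 𝕂) : Prop :=
  RelProdBounded A ∧ ∀ B ∈ limitSemigroup A, B ≠ 0 → B.rank = 1

/-- The product `A_{i n} ⋯ A_{i 1}` along the first `n` terms of the sequence `i`
(indexed from `1`). -/
noncomputable def seqProd (A : Fin r → Matrix ι ι 𝕂) (i : ℕ → Fin r) (n : ℕ) :
    Matrix ι ι 𝕂 :=
  wordProd A fun k : Fin n => i (k.val + 1)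

/-- The unbounded agreements property: any two sequences whose normalised partial
products do not tend to zero (i.e. `limsup ‖A_{i(n)} ⋯ A_{i(1)}‖ / ϱ(𝒜)^n > 0`) contain
arbitrarily long identical blocks. -/
def UnboundedAgreements (A : Fin r → Matrix ι ι 𝕂) : Prop :=
  ∀ N : ℕ, ∀ i₁ i₂ : ℕ → Fin r,
    (∃ c > (0 : ℝ), ∀ m : ℕ, ∃ n, m ≤ n ∧ c ≤ eNorm (seqProd A i₁ n) / jsr A ^ n) →
    (∃ c > (0 : ℝ), ∀ m : ℕ, ∃ n, m ≤ n ∧ c ≤ eNorm (seqProd A i₂ n) / jsr A ^ n) →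
    ∃ n₁ n₂ : ℕ, ∀ k : ℕ, 1 ≤ k → k ≤ N → i₁ (n₁ + k) = i₂ (n₂ + k)

/-- The finiteness property: some periodic product realises the joint spectral radius,
`ρ(A_{i_n} ⋯ A_{i_1})^{1/n} = ϱ(𝒜)`. -/
def FinitenessProp (A : Fin r → Matrix ι ι 𝕂) : Prop :=
  ∃ (n : ℕ) (_ : 0 < n) (i : Fin n → Fin r),
    specRad (wordProd A i) ^ ((n : ℝ)⁻¹) = jsr A

/-- The second exterior power (second compound matrix) of a `d × d` matrix, written
in the standard basis `(e_i ∧ e_j)_{i < j}` of `⋀² 𝕂^d`. -/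
noncomputable def ext2 {d : ℕ} (A : Matrix (Fin d) (Fin d) 𝕂) :
    Matrix {p : Fin d × Fin d // p.1 < p.2} {p : Fin d × Fin d // p.1 < p.2} 𝕂 :=
  fun p q => A p.1.1 q.1.1 * A p.1.2 q.1.2 - A p.1.1 q.1.2 * A p.1.2 q.1.1

/-- The word `ω` of length `n` is a power of a shorter word. -/
def IsPowerOfShorter {n : ℕ} (ω : Fin n → Fin r) : Prop :=
  ∃ (q : ℕ) (h0 : 0 < q) (h1 : q < n), q ∣ n ∧
    ∀ j : Fin n, ω j = ω ⟨j.val % q, lt_trans (Nat.mod_lt _ h0) h1⟩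

/-- `Θ_ω(𝒜)`: the supremum of `‖A_{ω_n} ⋯ A_{ω_1}‖^{1/n}` over all Barabanov norms. -/
noncomputable def Theta {n : ℕ} (ω : Fin n → Fin r) (A : Fin r → Matrix ι ι 𝕂) : ℝ :=
  sSup {x : ℝ | ∃ N, IsBarabanov A N ∧ x = opNormWrt N (wordProd A ω) ^ ((n : ℝ)⁻¹)}

end JSRPaper

namespace Ex13
open JSRPaper Matrix

variable {𝕂 : Type*} [RCLike 𝕂]

abbrev CLM (M : Matrix (Fin 2) (Fin 2) 𝕂) := Matrix.toEuclideanCLM (𝕜 := 𝕂) M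

/-- coordinate max norm -/
def Nm (v : EuclideanSpace 𝕂 (Fin 2)) : ℝ := max ‖v 0‖ ‖v 1‖

lemma Nm_nonneg (v : EuclideanSpace 𝕂 (Fin 2)) : 0 ≤ Nm v :=
  le_trans (norm_nonneg _) (le_max_left _ _)

lemma coord_le_norm (v : EuclideanSpace 𝕂 (Fin 2)) (j : Fin 2) : ‖v j‖ ≤ ‖v‖ := by
  rw [EuclideanSpace.norm_eq]
  calc ‖v j‖ = Real.sqrt (‖v j‖^2) := by rw [Real.sqrt_sq (norm_nonneg _)]
  _ ≤ _ := by
      apply Real.sqrt_le_sqrt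
      exact Finset.single_le_sum (f := fun i => ‖v i‖^2) (fun i _ => by positivity)
        (Finset.mem_univ j)

lemma Nm_le_norm (v : EuclideanSpace 𝕂 (Fin 2)) : Nm v ≤ ‖v‖ :=
  max_le (coord_le_norm v 0) (coord_le_norm v 1)

lemma norm_le_sqrt2_Nm (v : EuclideanSpace 𝕂 (Fin 2)) : ‖v‖ ≤ Real.sqrt 2 * Nm v := by
  rw [EuclideanSpace.norm_eq, Fin.sum_univ_two]
  rw [show Real.sqrt 2 * Nm v = Real.sqrt (2 * (Nm v)^2) by
    rw [Real.sqrt_mul (by norm_num), Real.sqrt_sq (Nm_nonneg v)]]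
  apply Real.sqrt_le_sqrt
  have h0 : ‖v 0‖ ≤ Nm v := le_max_left _ _
  have h1 : ‖v 1‖ ≤ Nm v := le_max_right _ _
  nlinarith [norm_nonneg (v 0), norm_nonneg (v 1)]

lemma clm_apply (M : Matrix (Fin 2) (Fin 2) 𝕂) (v : EuclideanSpace 𝕂 (Fin 2)) (j : Fin 2) :
    (CLM M v) j = M j 0 * v 0 + M j 1 * v 1 := by
  have h : v = (WithLp.equiv _ _).symm (WithLp.equiv _ _ v) := rfl
  rw [CLM, h, Matrix.ofLp_toEuclideanCLM]
  simp [Matrix.mulVec, dotProduct, Fin.sum_univ_two]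

lemma eNorm_le_of_Nm_bound {M : Matrix (Fin 2) (Fin 2) 𝕂} {B : ℝ} (hB : 0 ≤ B)
    (h : ∀ v, Nm (CLM M v) ≤ B * Nm v) : eNorm M ≤ Real.sqrt 2 * B := by
  rw [eNorm]
  apply ContinuousLinearMap.opNorm_le_bound _ (by positivity)
  intro v
  calc ‖CLM M v‖ ≤ Real.sqrt 2 * Nm (CLM M v) := norm_le_sqrt2_Nm _
  _ ≤ Real.sqrt 2 * (B * Nm v) := by
      apply mul_le_mul_of_nonneg_left (h v) (Real.sqrt_nonneg 2)
  _ ≤ Real.sqrt 2 * (B * ‖v‖) := by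
      apply mul_le_mul_of_nonneg_left _ (Real.sqrt_nonneg 2)
      exact mul_le_mul_of_nonneg_left (Nm_le_norm v) hB
  _ = Real.sqrt 2 * B * ‖v‖ := by ring

lemma entry_le_eNorm (M : Matrix (Fin 2) (Fin 2) 𝕂) (j k : Fin 2) : ‖M j k‖ ≤ eNorm M := by
  have h1 : (CLM M (EuclideanSpace.single k 1)) j = M j k := by
    rw [clm_apply]
    fin_cases k <;> simp [EuclideanSpace.single_apply]
  calc ‖M j k‖ = ‖(CLM M (EuclideanSpace.single k 1)) j‖ := by rw [h1]
  _ ≤ ‖CLM M (EuclideanSpace.single k (1:𝕂))‖ := coord_le_norm _ j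
  _ ≤ ‖CLM M‖ * ‖(EuclideanSpace.single k (1:𝕂) : EuclideanSpace 𝕂 (Fin 2))‖ :=
      ContinuousLinearMap.le_opNorm _ _
  _ = eNorm M := by rw [EuclideanSpace.norm_single, norm_one, mul_one]; rfl

lemma eNorm_nonneg (M : Matrix (Fin 2) (Fin 2) 𝕂) : 0 ≤ eNorm M := norm_nonneg _

lemma wordProd_nil {r : ℕ} (A : Fin r → Matrix (Fin 2) (Fin 2) 𝕂) (i : Fin 0 → Fin r) :
    wordProd A i = 1 := by
  simp [wordProd]

lemma wordProd_succ {r n : ℕ} (A : Fin r → Matrix (Fin 2) (Fin 2) 𝕂) (i : Fin (n+1) → Fin r) :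
    wordProd A i = A (i (Fin.last n)) * wordProd A (fun k : Fin n => i k.castSucc) := by
  rw [wordProd, wordProd, List.ofFn_succ', List.concat_eq_append, List.reverse_append]
  simp

end Ex13

namespace Part2
open JSRPaper Matrix Ex13

variable {𝕂 : Type*} [RCLike 𝕂]

/-- The pair of matrices of the example. -/
def Am (lam₁ lam₂ : 𝕂) : Fin 2 → Matrix (Fin 2) (Fin 2) 𝕂 :=
  ![!![0, 1; lam₁, 0], !![0, lam₂; 1, 0]]

variable {lam₁ lam₂ : 𝕂}

lemma Am0 : Am lam₁ lam₂ 0 = !![0, 1; lam₁, 0] := rfl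
lemma Am1 : Am lam₁ lam₂ 1 = !![0, lam₂; 1, 0] := rfl

lemma clm0_0 (v : EuclideanSpace 𝕂 (Fin 2)) : (CLM (Am lam₁ lam₂ 0) v) 0 = v 1 := by
  rw [clm_apply, Am0]; simp

lemma clm0_1 (v : EuclideanSpace 𝕂 (Fin 2)) : (CLM (Am lam₁ lam₂ 0) v) 1 = lam₁ * v 0 := by
  rw [clm_apply, Am0]; simp

lemma clm1_0 (v : EuclideanSpace 𝕂 (Fin 2)) : (CLM (Am lam₁ lam₂ 1) v) 0 = lam₂ * v 1 := by
  rw [clm_apply, Am1]; simp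

lemma clm1_1 (v : EuclideanSpace 𝕂 (Fin 2)) : (CLM (Am lam₁ lam₂ 1) v) 1 = v 0 := by
  rw [clm_apply, Am1]; simp

lemma Nm_step (h₁ : ‖lam₁‖ ≤ 1) (h₂ : ‖lam₂‖ ≤ 1) (j : Fin 2) (v : EuclideanSpace 𝕂 (Fin 2)) :
    Nm (CLM (Am lam₁ lam₂ j) v) ≤ Nm v := by
  have hj : j = 0 ∨ j = 1 := by omega
  rcases hj with hj | hj <;> subst hj
  · rw [Nm, clm0_0, clm0_1, norm_mul]
    apply max_le (le_max_right _ _)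
    calc ‖lam₁‖ * ‖v 0‖ ≤ 1 * ‖v 0‖ := mul_le_mul_of_nonneg_right h₁ (norm_nonneg _)
    _ ≤ Nm v := by rw [one_mul]; exact le_max_left _ _
  · rw [Nm, clm1_0, clm1_1, norm_mul]
    apply max_le _ (le_max_left _ _)
    calc ‖lam₂‖ * ‖v 1‖ ≤ 1 * ‖v 1‖ := mul_le_mul_of_nonneg_right h₂ (norm_nonneg _)
    _ ≤ Nm v := by rw [one_mul]; exact le_max_right _ _

lemma clm_mul (M N : Matrix (Fin 2) (Fin 2) 𝕂) (v : EuclideanSpace 𝕂 (Fin 2)) :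
    CLM (M * N) v = CLM M (CLM N v) := by
  rw [CLM, _root_.map_mul]; rfl

lemma Nm_word (h₁ : ‖lam₁‖ ≤ 1) (h₂ : ‖lam₂‖ ≤ 1) {n : ℕ} (i : Fin n → Fin 2)
    (v : EuclideanSpace 𝕂 (Fin 2)) :
    Nm (CLM (wordProd (Am lam₁ lam₂) i) v) ≤ Nm v := by
  induction n generalizing v with
  | zero => rw [wordProd_nil]; simp [CLM]
  | succ n ih =>
      rw [wordProd_succ, clm_mul]
      exact le_trans (Nm_step h₁ h₂ _ _) (ih _ _)

lemma eNorm_word_le (h₁ : ‖lam₁‖ ≤ 1) (h₂ : ‖lam₂‖ ≤ 1) {n : ℕ} (i : Fin n → Fin 2) :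
    eNorm (wordProd (Am lam₁ lam₂) i) ≤ Real.sqrt 2 := by
  have := eNorm_le_of_Nm_bound (M := wordProd (Am lam₁ lam₂) i) (B := 1) zero_le_one
    (fun v => by rw [one_mul]; exact Nm_word h₁ h₂ i v)
  simpa using this

/-- the alternating word -/
def alt (n : ℕ) : Fin n → Fin 2 := fun k => ⟨k.val % 2, Nat.mod_lt _ (by norm_num)⟩

lemma alt_prod (n : ℕ) :
    wordProd (Am lam₁ lam₂) (alt n) =
      if n % 2 = 0 then !![(lam₂*lam₁)^(n/2), 0; 0, 1]
      else !![0, 1; lam₁ * (lam₂*lam₁)^(n/2), 0] := by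
  induction n with
  | zero =>
      rw [wordProd_nil, if_pos rfl]
      ext i j
      fin_cases i <;> fin_cases j <;> simp [Matrix.one_apply]
  | succ n ih =>
      rw [wordProd_succ]
      have hcast : (fun k : Fin n => alt (n+1) k.castSucc) = alt n := by
        funext k; rfl
      rw [hcast, ih]
      rcases Nat.even_or_odd n with he | ho
      · have h2 : n % 2 = 0 := Nat.even_iff.mp he
        have hlast : alt (n+1) (Fin.last n) = 0 := by
          apply Fin.ext; simp [alt, Fin.last]; omega
        rw [hlast, if_pos h2, if_neg (by omega : ¬((n+1) % 2 = 0)), Am0,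
          Matrix.mul_fin_two, show (n+1)/2 = n/2 by omega]
        ext i j
        fin_cases i <;> fin_cases j <;> simp <;> ring
      · have h2 : n % 2 = 1 := Nat.odd_iff.mp ho
        have hlast : alt (n+1) (Fin.last n) = 1 := by
          apply Fin.ext; simp [alt, Fin.last]; omega
        rw [hlast, if_neg (by omega : ¬(n % 2 = 0)),
          if_pos (by omega : (n+1) % 2 = 0), Am1,
          Matrix.mul_fin_two, show (n+1)/2 = n/2 + 1 by omega]
        ext i j
        fin_cases i <;> fin_cases j <;> simp <;> ring

lemma alt_prod_entry (n : ℕ) :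
    ∃ j k : Fin 2, (wordProd (Am lam₁ lam₂) (alt n)) j k = 1 := by
  rw [alt_prod]
  rcases Nat.decEq (n % 2) 0 with h | h
  · exact ⟨0, 1, by rw [if_neg h]; simp⟩
  · exact ⟨1, 1, by rw [if_pos h]; simp⟩

end Part2

namespace Part3
open JSRPaper Matrix Ex13 Part2

variable {𝕂 : Type*} [RCLike 𝕂]

lemma one_le_sqrt2 : (1:ℝ) ≤ Real.sqrt 2 := by
  rw [show (1:ℝ) = Real.sqrt 1 by simp]
  exact Real.sqrt_le_sqrt (by norm_num)

lemma pnat_inf_eq_one (b : ℕ+ → ℝ) (hlo : ∀ n, 1 ≤ b n) (hhi : ∀ n, b n ≤ Real.sqrt 2) :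
    ⨅ n : ℕ+, (b n) ^ (((n : ℕ) : ℝ)⁻¹) = 1 := by
  have hbdd : BddBelow (Set.range fun n : ℕ+ => (b n) ^ (((n : ℕ) : ℝ)⁻¹)) := by
    refine ⟨0, ?_⟩
    rintro x ⟨n, rfl⟩
    exact Real.rpow_nonneg (le_trans zero_le_one (hlo n)) _
  apply le_antisymm
  · apply le_of_forall_pos_le_add
    intro ε hε
    obtain ⟨k, hk⟩ := pow_unbounded_of_one_lt (Real.sqrt 2) (by linarith : (1:ℝ) < 1 + ε)
    have hk0 : k ≠ 0 := by
      intro h; subst h; simp at hk; linarith [one_le_sqrt2]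
    refine le_trans (ciInf_le hbdd ⟨k, Nat.pos_of_ne_zero hk0⟩) ?_
    have h1 : (b ⟨k, Nat.pos_of_ne_zero hk0⟩) ^ (((k : ℕ) : ℝ)⁻¹) ≤
        (Real.sqrt 2) ^ (((k : ℕ) : ℝ)⁻¹) :=
      Real.rpow_le_rpow (le_trans zero_le_one (hlo _)) (hhi _) (by positivity)
    have h2 : (Real.sqrt 2) ^ (((k : ℕ) : ℝ)⁻¹) ≤ ((1 + ε) ^ k) ^ (((k : ℕ) : ℝ)⁻¹) :=
      Real.rpow_le_rpow (Real.sqrt_nonneg 2) hk.le (by positivity)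
    have h3 : ((1 + ε) ^ k : ℝ) ^ (((k : ℕ) : ℝ)⁻¹) = 1 + ε := by
      rw [← Real.rpow_natCast (1 + ε) k, ← Real.rpow_mul (by linarith),
        mul_inv_cancel₀ (by exact_mod_cast hk0), Real.rpow_one]
    calc (b ⟨k, Nat.pos_of_ne_zero hk0⟩) ^ (((⟨k, Nat.pos_of_ne_zero hk0⟩ : ℕ+) : ℕ) : ℝ)⁻¹
        ≤ ((1 + ε) ^ k : ℝ) ^ (((k:ℕ):ℝ)⁻¹) := le_trans h1 h2
    _ = 1 + ε := h3
  · apply le_ciInf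
    intro n
    calc (1:ℝ) = 1 ^ (((n : ℕ) : ℝ)⁻¹) := (Real.one_rpow _).symm
    _ ≤ (b n) ^ (((n : ℕ) : ℝ)⁻¹) := Real.rpow_le_rpow zero_le_one (hlo n) (by positivity)

variable {lam₁ lam₂ : 𝕂}

lemma sup_word_le (h₁ : ‖lam₁‖ ≤ 1) (h₂ : ‖lam₂‖ ≤ 1) (n : ℕ) :
    (⨆ i : Fin n → Fin 2, eNorm (wordProd (Am lam₁ lam₂) i)) ≤ Real.sqrt 2 :=
  ciSup_le fun i => eNorm_word_le h₁ h₂ i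

lemma one_le_sup_word (n : ℕ) :
    1 ≤ ⨆ i : Fin n → Fin 2, eNorm (wordProd (Am lam₁ lam₂) i) := by
  obtain ⟨j, k, hjk⟩ := alt_prod_entry (lam₁ := lam₁) (lam₂ := lam₂) n
  have h1 : 1 ≤ eNorm (wordProd (Am lam₁ lam₂) (alt n)) := by
    have := entry_le_eNorm (wordProd (Am lam₁ lam₂) (alt n)) j k
    rw [hjk] at this; simpa using this
  exact le_trans h1 (le_ciSup (f := fun i : Fin n → Fin 2 => eNorm (wordProd (Am lam₁ lam₂) i))
    (Set.Finite.bddAbove (Set.finite_range _)) (alt n))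

lemma jsr_eq_one (h₁ : ‖lam₁‖ ≤ 1) (h₂ : ‖lam₂‖ ≤ 1) : jsr (Am lam₁ lam₂) = 1 := by
  rw [jsr]
  exact pnat_inf_eq_one _ (fun n => one_le_sup_word _) (fun n => sup_word_le h₁ h₂ _)

lemma prod01 : Am lam₁ lam₂ 0 * Am lam₁ lam₂ 1 = !![1, 0; 0, lam₁ * lam₂] := by
  rw [Am0, Am1, Matrix.mul_fin_two]
  norm_num

lemma diag_pow (μ : 𝕂) (k : ℕ) : (!![1, 0; 0, μ]) ^ k = !![1, 0; 0, μ ^ k] := by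
  induction k with
  | zero =>
      rw [pow_zero, pow_zero]
      ext i j; fin_cases i <;> fin_cases j <;> simp [Matrix.one_apply]
  | succ k ih =>
      rw [pow_succ, ih, Matrix.mul_fin_two, pow_succ]
      norm_num

lemma specRad_eq_one (h₁ : ‖lam₁‖ ≤ 1) (h₂ : ‖lam₂‖ ≤ 1) :
    specRad (Am lam₁ lam₂ 0 * Am lam₁ lam₂ 1) = 1 := by
  rw [specRad]
  have hμ : ‖lam₁ * lam₂‖ ≤ 1 := by
    rw [norm_mul]
    calc ‖lam₁‖ * ‖lam₂‖ ≤ 1 * 1 :=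
      mul_le_mul h₁ h₂ (norm_nonneg _) zero_le_one
    _ = 1 := one_mul 1
  apply pnat_inf_eq_one
  · intro n
    rw [prod01, diag_pow]
    have := entry_le_eNorm (𝕂 := 𝕂) !![1, 0; 0, (lam₁*lam₂) ^ (n:ℕ)] 0 0
    simpa using this
  · intro n
    rw [prod01, diag_pow]
    have hb := eNorm_le_of_Nm_bound (M := !![1, 0; 0, (lam₁*lam₂) ^ (n:ℕ)]) (B := 1) zero_le_one ?_
    · simpa using hb
    · intro v
      rw [one_mul, Nm, clm_apply, clm_apply]
      norm_num
      constructor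
      · exact le_max_left _ _
      · calc (‖lam₁‖*‖lam₂‖)^(n:ℕ) * ‖v 1‖ ≤ 1 * ‖v 1‖ := by
              apply mul_le_mul_of_nonneg_right _ (norm_nonneg _)
              apply pow_le_one₀ (by positivity)
              calc ‖lam₁‖*‖lam₂‖ ≤ 1*1 := mul_le_mul h₁ h₂ (norm_nonneg _) zero_le_one
              _ = 1 := one_mul 1
        _ ≤ Nm v := by rw [one_mul]; exact le_max_right _ _

end Part3

namespace Part4
open JSRPaper Matrix Ex13 Part2 Part3

variable {𝕂 : Type*} [RCLike 𝕂]

lemma ciSup_fin2 (g : Fin 2 → ℝ) : ⨆ i, g i = max (g 0) (g 1) := by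
  apply le_antisymm
  · apply ciSup_le
    intro i
    have hi : i = 0 ∨ i = 1 := by omega
    rcases hi with hi | hi <;> subst hi
    exacts [le_max_left _ _, le_max_right _ _]
  · exact max_le (le_ciSup (Set.Finite.bddAbove (Set.finite_range g)) 0)
      (le_ciSup (Set.Finite.bddAbove (Set.finite_range g)) 1)

noncomputable def vec (x y : 𝕂) : EuclideanSpace 𝕂 (Fin 2) := (WithLp.equiv 2 _).symm ![x, y]

lemma vec0 (x y : 𝕂) : vec x y 0 = x := rfl
lemma vec1 (x y : 𝕂) : vec x y 1 = y := rfl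

lemma smul_vec (c x y : 𝕂) : c • vec x y = vec (c*x) (c*y) := by
  refine PiLp.ext fun j => ?_
  fin_cases j <;> simp [vec]

lemma add_vec (x y a b : 𝕂) : vec x y + vec a b = vec (x+a) (y+b) := by
  refine PiLp.ext fun j => ?_
  fin_cases j <;> simp [vec]

lemma eq_vec (v : EuclideanSpace 𝕂 (Fin 2)) : v = vec (v 0) (v 1) := by
  refine PiLp.ext fun j => ?_
  fin_cases j <;> rfl

lemma vec_eq_zero {x y : 𝕂} (h : vec x y = 0) : x = 0 ∧ y = 0 :=
  ⟨congrArg (fun w : EuclideanSpace 𝕂 (Fin 2) => w 0) h,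
    congrArg (fun w : EuclideanSpace 𝕂 (Fin 2) => w 1) h⟩

lemma Nm_vec (x y : 𝕂) : Nm (vec x y) = max ‖x‖ ‖y‖ := rfl

/-- `Nm` is a norm. -/
lemma isNorm_Nm : IsNorm (Nm : EuclideanSpace 𝕂 (Fin 2) → ℝ) := by
  refine ⟨fun v => ?_, fun c v => ?_, fun u v => ?_⟩
  · constructor
    · intro h
      have h0 : ‖v 0‖ = 0 := le_antisymm (h ▸ le_max_left _ _) (norm_nonneg _)
      have h1 : ‖v 1‖ = 0 := le_antisymm (h ▸ le_max_right _ _) (norm_nonneg _)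
      rw [eq_vec v, norm_eq_zero.mp h0, norm_eq_zero.mp h1]
      refine PiLp.ext fun j => ?_
      fin_cases j <;> rfl
    · intro h; subst h
      simp [Nm]
  · rw [Nm, Nm, PiLp.smul_apply, PiLp.smul_apply, smul_eq_mul, smul_eq_mul, norm_mul, norm_mul]
    rcases le_total ‖v 0‖ ‖v 1‖ with h | h
    · rw [max_eq_right h, max_eq_right (mul_le_mul_of_nonneg_left h (norm_nonneg c))]
    · rw [max_eq_left h, max_eq_left (mul_le_mul_of_nonneg_left h (norm_nonneg c))]
  · rw [Nm, Nm, Nm, PiLp.add_apply, PiLp.add_apply]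
    apply max_le
    · exact le_trans (norm_add_le _ _) (add_le_add (le_max_left _ _) (le_max_left _ _))
    · exact le_trans (norm_add_le _ _) (add_le_add (le_max_right _ _) (le_max_right _ _))

variable {lam₁ lam₂ : 𝕂}

lemma isBarabanov_Nm (h₁ : ‖lam₁‖ ≤ 1) (h₂ : ‖lam₂‖ ≤ 1) :
    IsBarabanov (Am lam₁ lam₂) (Nm : EuclideanSpace 𝕂 (Fin 2) → ℝ) := by
  refine ⟨isNorm_Nm, fun v => ?_⟩
  rw [jsr_eq_one h₁ h₂, one_mul,
    ciSup_fin2 (fun i => Nm (CLM (Am lam₁ lam₂ i) v))]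
  apply le_antisymm
  · apply max_le
    · calc ‖v 0‖ = ‖(CLM (Am lam₁ lam₂ 1) v) 1‖ := by rw [clm1_1]
      _ ≤ Nm (CLM (Am lam₁ lam₂ 1) v) := le_max_right _ _
      _ ≤ _ := le_max_right _ _
    · calc ‖v 1‖ = ‖(CLM (Am lam₁ lam₂ 0) v) 0‖ := by rw [clm0_0]
      _ ≤ Nm (CLM (Am lam₁ lam₂ 0) v) := le_max_left _ _
      _ ≤ _ := le_max_left _ _
  · exact max_le (Nm_step h₁ h₂ 0 v) (Nm_step h₁ h₂ 1 v)

/-! ### facts about an arbitrary norm -/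

lemma norm_nonneg' {N : EuclideanSpace 𝕂 (Fin 2) → ℝ} (hN : IsNorm N)
    (v : EuclideanSpace 𝕂 (Fin 2)) : 0 ≤ N v := by
  have hz : N 0 = 0 := (hN.1 0).mpr rfl
  have hneg : N (-v) = N v := by
    have := hN.2.1 (-1) v
    simpa using this
  have htri := hN.2.2 v (-v)
  rw [add_neg_cancel, hz, hneg] at htri
  linarith

end Part4

namespace Part5
open JSRPaper Matrix Ex13 Part2 Part3 Part4

variable {𝕂 : Type*} [RCLike 𝕂] {lam₁ lam₂ : 𝕂}

lemma clm0_vec (x y : 𝕂) :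
    CLM (Am lam₁ lam₂ 0) (vec x y) = vec y (lam₁ * x) := by
  refine PiLp.ext fun j => ?_
  rcases (by omega : j = 0 ∨ j = 1) with rfl | rfl
  · rw [clm0_0, vec0, vec1]
  · rw [clm0_1, vec0, vec1]

lemma clm1_vec (x y : 𝕂) :
    CLM (Am lam₁ lam₂ 1) (vec x y) = vec (lam₂ * y) x := by
  refine PiLp.ext fun j => ?_
  rcases (by omega : j = 0 ∨ j = 1) with rfl | rfl
  · rw [clm1_0, vec0, vec1]
  · rw [clm1_1, vec0, vec1]

lemma mu_lt_one (h₁ : ‖lam₁‖ < 1) (h₂ : ‖lam₂‖ < 1) : ‖lam₁ * lam₂‖ < 1 := by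
  rw [norm_mul]
  calc ‖lam₁‖ * ‖lam₂‖ ≤ 1 * ‖lam₂‖ :=
    mul_le_mul_of_nonneg_right h₁.le (norm_nonneg _)
  _ = ‖lam₂‖ := one_mul _
  _ < 1 := h₂

lemma small_pow (h₁ : ‖lam₁‖ < 1) (h₂ : ‖lam₂‖ < 1) (C : ℝ) {ε : ℝ} (hε : 0 < ε) :
    ∃ k : ℕ, ‖(lam₁*lam₂)^k‖ * C < ε := by
  obtain ⟨k, hk⟩ := exists_pow_lt_of_lt_one
    (show (0:ℝ) < ε / (|C| + 1) by positivity) (mu_lt_one h₁ h₂)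
  refine ⟨k, ?_⟩
  rw [norm_pow]
  have h3 : ‖lam₁*lam₂‖^k * C ≤ ‖lam₁*lam₂‖^k * |C| :=
    mul_le_mul_of_nonneg_left (le_abs_self C) (by positivity)
  have h4 : ε / (|C| + 1) * (|C| + 1) = ε := by field_simp
  nlinarith [abs_nonneg C, pow_nonneg (norm_nonneg (lam₁*lam₂)) k]

section
variable {N : EuclideanSpace 𝕂 (Fin 2) → ℝ}
  (h₁ : ‖lam₁‖ < 1) (h₂ : ‖lam₂‖ < 1)
  (hB : IsBarabanov (Am lam₁ lam₂) N)

include h₁ h₂ hB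

lemma key1 (x y : 𝕂) :
    N (vec x y) = max (N (vec y (lam₁ * x))) (N (vec (lam₂ * y) x)) := by
  have := hB.2 (vec x y)
  rw [jsr_eq_one h₁.le h₂.le, one_mul,
    ciSup_fin2 (fun i => N (CLM (Am lam₁ lam₂ i) (vec x y))), clm0_vec, clm1_vec] at this
  exact this

lemma Npos {x y : 𝕂} (h : ¬ (x = 0 ∧ y = 0)) : 0 < N (vec x y) := by
  rcases lt_or_eq_of_le (norm_nonneg' hB.1 (vec x y)) with hp | hp
  · exact hp
  · exact absurd (vec_eq_zero ((hB.1.1 _).mp hp.symm)) h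

lemma swap0 (x : 𝕂) : N (vec x 0) = N (vec 0 x) := by
  have h := key1 h₁ h₂ hB x 0
  have h2 : N (vec 0 (lam₁ * x)) = ‖lam₁‖ * N (vec 0 x) := by
    rw [show vec (0:𝕂) (lam₁ * x) = lam₁ • vec 0 x by rw [smul_vec, mul_zero]]
    exact hB.1.2.1 lam₁ _
  rw [mul_zero] at h
  rw [h, h2, max_eq_right]
  calc ‖lam₁‖ * N (vec 0 x) ≤ 1 * N (vec 0 x) :=
    mul_le_mul_of_nonneg_right h₁.le (norm_nonneg' hB.1 _)
  _ = N (vec 0 x) := one_mul _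

lemma scale0 (x : 𝕂) : N (vec x 0) = ‖x‖ * N (vec 1 0) := by
  rw [show vec x (0:𝕂) = x • vec 1 0 by rw [smul_vec, mul_one, mul_zero]]
  exact hB.1.2.1 x _

lemma scale1 (x : 𝕂) : N (vec 0 x) = ‖x‖ * N (vec 1 0) := by
  rw [← swap0 h₁ h₂ hB, scale0 h₁ h₂ hB]

lemma c_pos : 0 < N (vec (1:𝕂) 0) := by
  apply Npos h₁ h₂ hB
  intro ⟨h, _⟩
  exact one_ne_zero h

/-- the two-branch identity -/
lemma key2 {x y : 𝕂} (hpos : 0 < N (vec x y)) :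
    N (vec x y) = max (N (vec (lam₁ * lam₂ * x) y)) (N (vec x (lam₁ * lam₂ * y))) := by
  have h := key1 h₁ h₂ hB x y
  have ha : N (vec y (lam₁ * x)) =
      max (‖lam₁‖ * N (vec x y)) (N (vec (lam₁ * lam₂ * x) y)) := by
    have := key1 h₁ h₂ hB y (lam₁ * x)
    rw [show vec (lam₁ * x) (lam₁ * y) = lam₁ • vec x y by rw [smul_vec]] at this
    rw [show lam₂ * (lam₁ * x) = lam₁ * lam₂ * x by ring] at this
    rw [this, hB.1.2.1]
  have hb : N (vec (lam₂ * y) x) =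
      max (N (vec x (lam₁ * lam₂ * y))) (‖lam₂‖ * N (vec x y)) := by
    have := key1 h₁ h₂ hB (lam₂ * y) x
    rw [show lam₁ * (lam₂ * y) = lam₁ * lam₂ * y by ring] at this
    rw [show vec (lam₂ * x) (lam₂ * y) = lam₂ • vec x y by rw [smul_vec]] at this
    rw [this, hB.1.2.1]
  rw [ha, hb] at h
  set b := N (vec (lam₁ * lam₂ * x) y) with hbdef
  set c := N (vec x (lam₁ * lam₂ * y)) with hcdef
  have hble : b ≤ N (vec x y) := by
    rw [h]; exact le_max_of_le_left (le_max_right _ _)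
  have hcle : c ≤ N (vec x y) := by
    rw [h]; exact le_max_of_le_right (le_max_left _ _)
  apply le_antisymm
  · rcases max_choice (max (‖lam₁‖ * N (vec x y)) b) (max c (‖lam₂‖ * N (vec x y))) with
      hc1 | hc1 <;> rw [hc1] at h
    · rcases max_choice (‖lam₁‖ * N (vec x y)) b with hc2 | hc2 <;> rw [hc2] at h
      · nlinarith
      · rw [← h]; exact le_max_left _ _
    · rcases max_choice c (‖lam₂‖ * N (vec x y)) with hc2 | hc2 <;> rw [hc2] at h
      · rw [← h]; exact le_max_right _ _
      · nlinarith
  · exact max_le hble hcle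

lemma mono2 (x y : 𝕂) : N (vec x (lam₁ * lam₂ * y)) ≤ N (vec x y) := by
  by_cases hxy : x = 0 ∧ y = 0
  · rw [hxy.1, hxy.2, mul_zero]
  · have hp := Npos h₁ h₂ hB (N := N) hxy
    rw [key2 h₁ h₂ hB hp]
    exact le_max_right _ _

lemma mono1 (x y : 𝕂) : N (vec (lam₁ * lam₂ * x) y) ≤ N (vec x y) := by
  by_cases hxy : x = 0 ∧ y = 0
  · rw [hxy.1, hxy.2, mul_zero]
  · have hp := Npos h₁ h₂ hB (N := N) hxy
    rw [key2 h₁ h₂ hB hp]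
    exact le_max_left _ _

lemma mono2_pow (x y : 𝕂) (k : ℕ) : N (vec x ((lam₁ * lam₂)^k * y)) ≤ N (vec x y) := by
  induction k generalizing y with
  | zero => rw [pow_zero, one_mul]
  | succ k ih =>
      have h := ih (lam₁ * lam₂ * y)
      rw [show (lam₁*lam₂)^k * (lam₁*lam₂*y) = (lam₁*lam₂)^(k+1) * y by ring] at h
      exact le_trans h (mono2 h₁ h₂ hB x y)

lemma mono1_pow (x y : 𝕂) (k : ℕ) : N (vec ((lam₁ * lam₂)^k * x) y) ≤ N (vec x y) := by
  induction k generalizing x with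
  | zero => rw [pow_zero, one_mul]
  | succ k ih =>
      have h := ih (lam₁ * lam₂ * x)
      rw [show (lam₁*lam₂)^k * (lam₁*lam₂*x) = (lam₁*lam₂)^(k+1) * x by ring] at h
      exact le_trans h (mono1 h₁ h₂ hB x y)

lemma iter (k : ℕ) (x y : 𝕂) (hpos : 0 < N (vec x y)) :
    ∃ a b : ℕ, a + b = k ∧
      N (vec x y) = N (vec ((lam₁*lam₂)^a * x) ((lam₁*lam₂)^b * y)) := by
  induction k generalizing x y with
  | zero => exact ⟨0, 0, rfl, by rw [pow_zero, one_mul, one_mul]⟩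
  | succ k ih =>
      have h := key2 h₁ h₂ hB hpos
      rcases max_choice (N (vec (lam₁ * lam₂ * x) y)) (N (vec x (lam₁ * lam₂ * y))) with
        hc | hc <;> rw [hc] at h
      · obtain ⟨a, b, hab, he⟩ := ih (lam₁ * lam₂ * x) y (h ▸ hpos)
        refine ⟨a + 1, b, by omega, ?_⟩
        rw [h, he, show (lam₁*lam₂)^a * (lam₁*lam₂*x) = (lam₁*lam₂)^(a+1) * x by ring]
      · obtain ⟨a, b, hab, he⟩ := ih x (lam₁ * lam₂ * y) (h ▸ hpos)
        refine ⟨a, b + 1, by omega, ?_⟩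
        rw [h, he, show (lam₁*lam₂)^b * (lam₁*lam₂*y) = (lam₁*lam₂)^(b+1) * y by ring]

lemma lower_bound (x y : 𝕂) :
    N (vec 1 0) * max ‖x‖ ‖y‖ ≤ N (vec x y) := by
  by_cases hxy : x = 0 ∧ y = 0
  · rw [hxy.1, hxy.2]
    have h8 : max ‖(0:𝕂)‖ ‖(0:𝕂)‖ = 0 := by simp
    rw [h8, mul_zero]
    exact norm_nonneg' hB.1 _
  · set c := N (vec (1:𝕂) 0) with hc
    have hcpos := c_pos h₁ h₂ hB
    rw [← hc] at hcpos
    have hx : c * ‖x‖ ≤ N (vec x y) := by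
      apply le_of_forall_pos_le_add
      intro ε hε
      obtain ⟨k, hk⟩ := small_pow h₁ h₂ (c * ‖y‖) hε
      have htri : N (vec x 0) ≤ N (vec x ((lam₁*lam₂)^k * y)) +
          N (vec 0 (-((lam₁*lam₂)^k * y))) := by
        have := hB.1.2.2 (vec x ((lam₁*lam₂)^k * y)) (vec 0 (-((lam₁*lam₂)^k * y)))
        rw [add_vec, add_zero, add_neg_cancel] at this
        exact this
      have h5 : N (vec 0 (-((lam₁*lam₂)^k * y))) = ‖(lam₁*lam₂)^k‖ * (c * ‖y‖) := by
        rw [scale1 h₁ h₂ hB, ← hc, norm_neg, norm_mul]; ring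
      have h6 := mono2_pow h₁ h₂ hB x y k
      have h7 := scale0 h₁ h₂ hB (N := N) x
      rw [← hc] at h7
      calc c * ‖x‖ = N (vec x 0) := by rw [h7]; ring
      _ ≤ N (vec x ((lam₁*lam₂)^k * y)) + ‖(lam₁*lam₂)^k‖ * (c * ‖y‖) := by
            rw [← h5]; exact htri
      _ ≤ N (vec x y) + ε := add_le_add h6 hk.le
    have hy : c * ‖y‖ ≤ N (vec x y) := by
      apply le_of_forall_pos_le_add
      intro ε hε
      obtain ⟨k, hk⟩ := small_pow h₁ h₂ (c * ‖x‖) hε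
      have htri : N (vec 0 y) ≤ N (vec ((lam₁*lam₂)^k * x) y) +
          N (vec (-((lam₁*lam₂)^k * x)) 0) := by
        have := hB.1.2.2 (vec ((lam₁*lam₂)^k * x) y) (vec (-((lam₁*lam₂)^k * x)) 0)
        rw [add_vec, add_zero, add_neg_cancel] at this
        exact this
      have h5 : N (vec (-((lam₁*lam₂)^k * x)) 0) = ‖(lam₁*lam₂)^k‖ * (c * ‖x‖) := by
        rw [scale0 h₁ h₂ hB, ← hc, norm_neg, norm_mul]; ring
      have h6 := mono1_pow h₁ h₂ hB x y k
      have h7 := scale1 h₁ h₂ hB (N := N) y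
      rw [← hc] at h7
      calc c * ‖y‖ = N (vec 0 y) := by rw [h7]; ring
      _ ≤ N (vec ((lam₁*lam₂)^k * x) y) + ‖(lam₁*lam₂)^k‖ * (c * ‖x‖) := by
            rw [← h5]; exact htri
      _ ≤ N (vec x y) + ε := add_le_add h6 hk.le
    rcases le_total ‖x‖ ‖y‖ with h | h
    · rw [max_eq_right h]; exact hy
    · rw [max_eq_left h]; exact hx

lemma upper_bound (x y : 𝕂) :
    N (vec x y) ≤ N (vec 1 0) * max ‖x‖ ‖y‖ := by
  set c := N (vec (1:𝕂) 0) with hc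
  have hcpos := c_pos h₁ h₂ hB
  rw [← hc] at hcpos
  by_cases hxy : x = 0 ∧ y = 0
  · rw [hxy.1, hxy.2]
    have hz : N (vec (0:𝕂) 0) = 0 := (hB.1.1 _).mpr (by
      refine PiLp.ext fun j => ?_; fin_cases j <;> rfl)
    have h8 : max ‖(0:𝕂)‖ ‖(0:𝕂)‖ = 0 := by simp
    rw [hz, h8, mul_zero]
  · have hpos := Npos h₁ h₂ hB (N := N) hxy
    apply le_of_forall_pos_le_add
    intro ε hε
    obtain ⟨k, hk⟩ := small_pow h₁ h₂ (c * (‖x‖ + ‖y‖)) hε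
    obtain ⟨a, b, hab, he⟩ := iter h₁ h₂ hB (2*k) x y hpos
    have hsplit : N (vec ((lam₁*lam₂)^a * x) ((lam₁*lam₂)^b * y)) ≤
        ‖(lam₁*lam₂)^a‖ * (c * ‖x‖) + ‖(lam₁*lam₂)^b‖ * (c * ‖y‖) := by
      have htri := hB.1.2.2 (vec ((lam₁*lam₂)^a * x) 0) (vec 0 ((lam₁*lam₂)^b * y))
      rw [add_vec, add_zero, zero_add] at htri
      have e1 : N (vec ((lam₁*lam₂)^a * x) 0) = ‖(lam₁*lam₂)^a‖ * (c * ‖x‖) := by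
        rw [scale0 h₁ h₂ hB, ← hc, norm_mul]; ring
      have e2 : N (vec 0 ((lam₁*lam₂)^b * y)) = ‖(lam₁*lam₂)^b‖ * (c * ‖y‖) := by
        rw [scale1 h₁ h₂ hB, ← hc, norm_mul]; ring
      rw [e1, e2] at htri
      exact htri
    have hnorm_le_one : ‖lam₁*lam₂‖ ≤ 1 := (mu_lt_one h₁ h₂).le
    have hak : a ≥ k ∨ b ≥ k := by omega
    have hmono : ∀ m : ℕ, m ≥ k → ‖(lam₁*lam₂)^m‖ ≤ ‖(lam₁*lam₂)^k‖ := by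
      intro m hm
      rw [norm_pow, norm_pow]
      exact pow_le_pow_of_le_one (norm_nonneg _) hnorm_le_one hm
    have hle1 : ∀ m : ℕ, ‖(lam₁*lam₂)^m‖ ≤ 1 := by
      intro m
      rw [norm_pow]
      exact pow_le_one₀ (norm_nonneg _) hnorm_le_one
    rw [he]
    rcases hak with hak | hak
    · calc N (vec ((lam₁*lam₂)^a * x) ((lam₁*lam₂)^b * y)) ≤
          ‖(lam₁*lam₂)^a‖ * (c * ‖x‖) + ‖(lam₁*lam₂)^b‖ * (c * ‖y‖) := hsplit
      _ ≤ ‖(lam₁*lam₂)^k‖ * (c * (‖x‖ + ‖y‖)) + 1 * (c * ‖y‖) := by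
          apply add_le_add
          · apply mul_le_mul (hmono a hak) _ (by positivity) (norm_nonneg _)
            nlinarith [norm_nonneg y, hcpos.le]
          · exact mul_le_mul_of_nonneg_right (hle1 b) (by positivity)
      _ ≤ c * max ‖x‖ ‖y‖ + ε := by
          rw [one_mul]
          have hy : c * ‖y‖ ≤ c * max ‖x‖ ‖y‖ :=
            mul_le_mul_of_nonneg_left (le_max_right _ _) hcpos.le
          linarith [hk]
    · calc N (vec ((lam₁*lam₂)^a * x) ((lam₁*lam₂)^b * y)) ≤
          ‖(lam₁*lam₂)^a‖ * (c * ‖x‖) + ‖(lam₁*lam₂)^b‖ * (c * ‖y‖) := hsplit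
      _ ≤ 1 * (c * ‖x‖) + ‖(lam₁*lam₂)^k‖ * (c * (‖x‖ + ‖y‖)) := by
          apply add_le_add
          · exact mul_le_mul_of_nonneg_right (hle1 a) (by positivity)
          · apply mul_le_mul (hmono b hak) _ (by positivity) (norm_nonneg _)
            nlinarith [norm_nonneg x, hcpos.le]
      _ ≤ c * max ‖x‖ ‖y‖ + ε := by
          rw [one_mul]
          have hy : c * ‖x‖ ≤ c * max ‖x‖ ‖y‖ :=
            mul_le_mul_of_nonneg_left (le_max_left _ _) hcpos.le
          linarith [hk]

lemma unique_barabanov :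
    ∃ c > (0:ℝ), ∀ v : EuclideanSpace 𝕂 (Fin 2), N v = c * Nm v := by
  refine ⟨N (vec 1 0), c_pos h₁ h₂ hB, fun v => ?_⟩
  rw [show N v = N (vec (v 0) (v 1)) by rw [← eq_vec], Nm]
  exact le_antisymm (upper_bound h₁ h₂ hB _ _) (lower_bound h₁ h₂ hB _ _)

end
end Part5

namespace Part6
open JSRPaper Matrix Ex13 Part2 Part3 Part4 Part5

variable {𝕂 : Type*} [RCLike 𝕂] {lam₁ lam₂ : 𝕂}

lemma fin2_eq (j : Fin 2) : j = 0 ∨ j = 1 := by omega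

lemma word2 (z : Fin 2 → Fin 2) :
    wordProd (Am lam₁ lam₂) z = Am lam₁ lam₂ (z 1) * Am lam₁ lam₂ (z 0) := by
  rw [wordProd_succ, wordProd_succ, wordProd_nil, mul_one]
  rfl

lemma sq0 : Am lam₁ lam₂ 0 * Am lam₁ lam₂ 0 = lam₁ • (1 : Matrix (Fin 2) (Fin 2) 𝕂) := by
  rw [Am0, Matrix.mul_fin_two]
  ext i j
  rcases (by omega : i = 0 ∨ i = 1) with rfl | rfl <;>
    rcases fin2_eq j with rfl | rfl <;>
      simp [Matrix.one_apply]

lemma sq1 : Am lam₁ lam₂ 1 * Am lam₁ lam₂ 1 = lam₂ • (1 : Matrix (Fin 2) (Fin 2) 𝕂) := by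
  rw [Am1, Matrix.mul_fin_two]
  ext i j
  rcases (by omega : i = 0 ∨ i = 1) with rfl | rfl <;>
    rcases fin2_eq j with rfl | rfl <;>
      simp [Matrix.one_apply]

lemma clm_smul_one (lam : 𝕂) (v : EuclideanSpace 𝕂 (Fin 2)) :
    CLM (lam • (1 : Matrix (Fin 2) (Fin 2) 𝕂)) v = lam • v := by
  rw [CLM, _root_.map_smul, _root_.map_one]
  rfl

lemma opNormWrt_smul_one_lt {N : EuclideanSpace 𝕂 (Fin 2) → ℝ} (hN : IsNorm N)
    {lam : 𝕂} (hlam : ‖lam‖ < 1) :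
    opNormWrt N (lam • (1 : Matrix (Fin 2) (Fin 2) 𝕂)) < 1 := by
  have hle : opNormWrt N (lam • (1 : Matrix (Fin 2) (Fin 2) 𝕂)) ≤ ‖lam‖ := by
    apply Real.sSup_le
    · rintro x ⟨v, hv, rfl⟩
      rw [clm_smul_one, hN.2.1]
      calc ‖lam‖ * N v ≤ ‖lam‖ * 1 :=
        mul_le_mul_of_nonneg_left hv (norm_nonneg _)
      _ = ‖lam‖ := mul_one _
    · exact norm_nonneg _
  exact lt_of_le_of_lt hle hlam

lemma strongFinHyp (h₁ : ‖lam₁‖ < 1) (h₂ : ‖lam₂‖ < 1) :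
    StrongFinHyp (Am lam₁ lam₂) (![0, 1] : Fin 2 → Fin 2) := by
  intro N hB z hz
  rw [jsr_eq_one h₁.le h₂.le, one_pow]
  have hzz : z 0 = z 1 := by
    by_contra hne
    apply hz
    rcases fin2_eq (z 0) with hz0 | hz0 <;>
      rcases fin2_eq (z 1) with hz1 | hz1
    · exact absurd (hz0.trans hz1.symm) hne
    · -- z = ![0,1] : k = 0
      refine ⟨0, fun j => ?_⟩
      rcases fin2_eq j with rfl | rfl
      · rw [hz0]; rfl
      · rw [hz1]; rfl
    · -- z = ![1,0] : k = 1
      refine ⟨1, fun j => ?_⟩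
      rcases fin2_eq j with rfl | rfl
      · rw [hz0]; rfl
      · rw [hz1]; rfl
    · exact absurd (hz0.trans hz1.symm) hne
  rw [word2, ← hzz]
  rcases fin2_eq (z 0) with hz0 | hz0 <;> rw [hz0]
  · rw [sq0]; exact opNormWrt_smul_one_lt hB.1 h₁
  · rw [sq1]; exact opNormWrt_smul_one_lt hB.1 h₂

lemma prod10 : Am lam₁ lam₂ 1 * Am lam₁ lam₂ 0 = !![lam₂ * lam₁, 0; 0, 1] := by
  rw [Am0, Am1, Matrix.mul_fin_two]
  norm_num

lemma sub_vec (a b c d : 𝕂) : vec a b - vec c d = vec (a-c) (b-d) := by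
  refine PiLp.ext fun j => ?_
  rcases fin2_eq j with rfl | rfl <;> simp [Part4.vec]

lemma irreducible (h₁ : ‖lam₁‖ < 1) (h₂ : ‖lam₂‖ < 1) :
    IsIrreducible (Am lam₁ lam₂) := by
  intro V hV
  by_cases hbot : V = ⊥
  · exact Or.inl hbot
  right
  obtain ⟨v, hvV, hv0⟩ := Submodule.exists_mem_ne_zero_of_ne_bot hbot
  have hmu : (1 : 𝕂) - lam₁ * lam₂ ≠ 0 := by
    intro h
    have hone : lam₁ * lam₂ = 1 := by linear_combination -h
    have hlt := mu_lt_one h₁ h₂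
    rw [hone] at hlt
    simp at hlt
  have hVclm : ∀ j : Fin 2, ∀ w ∈ V, CLM (Am lam₁ lam₂ j) w ∈ V := hV
  set x := v 0 with hx
  set y := v 1 with hy
  have hveq : v = vec x y := eq_vec v
  -- the two diagonal products applied to v
  have h1mem : vec (0:𝕂) ((1 - lam₁*lam₂)*y) ∈ V := by
    have hw : CLM (Am lam₁ lam₂ 0) (CLM (Am lam₁ lam₂ 1) v) ∈ V :=
      hVclm 0 _ (hVclm 1 v hvV)
    rw [hveq, clm1_vec, clm0_vec] at hw
    have hd := V.sub_mem (hveq ▸ hvV) hw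
    rw [sub_vec] at hd
    rw [show (0:𝕂) = x - x by ring, show (1 - lam₁*lam₂)*y = y - lam₁*(lam₂*y) by ring]
    exact hd
  have h2mem : vec ((1 - lam₁*lam₂)*x) (0:𝕂) ∈ V := by
    have hw : CLM (Am lam₁ lam₂ 1) (CLM (Am lam₁ lam₂ 0) v) ∈ V :=
      hVclm 1 _ (hVclm 0 v hvV)
    rw [hveq, clm0_vec, clm1_vec] at hw
    have hd := V.sub_mem (hveq ▸ hvV) hw
    rw [sub_vec] at hd
    rw [show (0:𝕂) = y - y by ring, show (1 - lam₁*lam₂)*x = x - lam₂*(lam₁*x) by ring]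
    exact hd
  have hbasis : vec (1:𝕂) 0 ∈ V ∧ vec (0:𝕂) 1 ∈ V := by
    by_cases hy0 : y = 0
    · have hx0 : x ≠ 0 := by
        intro hx0
        apply hv0
        rw [hveq, hx0, hy0]
        refine PiLp.ext fun j => ?_
        rcases fin2_eq j with rfl | rfl <;> rfl
      have ht : (1 - lam₁*lam₂)*x ≠ 0 := mul_ne_zero hmu hx0
      have he0 : vec (1:𝕂) 0 ∈ V := by
        have := V.smul_mem (((1 - lam₁*lam₂)*x)⁻¹) h2mem
        rw [smul_vec, mul_zero, inv_mul_cancel₀ ht] at this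
        exact this
      refine ⟨he0, ?_⟩
      have := hVclm 1 _ he0
      rw [clm1_vec, mul_zero] at this
      exact this
    · have ht : (1 - lam₁*lam₂)*y ≠ 0 := mul_ne_zero hmu hy0
      have he1 : vec (0:𝕂) 1 ∈ V := by
        have := V.smul_mem (((1 - lam₁*lam₂)*y)⁻¹) h1mem
        rw [smul_vec, mul_zero, inv_mul_cancel₀ ht] at this
        exact this
      refine ⟨?_, he1⟩
      have := hVclm 0 _ he1
      rw [clm0_vec, mul_zero] at this
      exact this
  rw [Submodule.eq_top_iff']
  intro w
  have hw : w = w 0 • vec (1:𝕂) 0 + w 1 • vec (0:𝕂) 1 := by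
    rw [smul_vec, smul_vec, add_vec, mul_one, mul_zero, mul_zero, mul_one,
      add_zero, zero_add]
    exact eq_vec w
  rw [hw]
  exact V.add_mem (V.smul_mem _ hbasis.1) (V.smul_mem _ hbasis.2)

end Part6

namespace Part7
open JSRPaper Matrix Ex13 Part2 Part3 Part4 Part5 Part6

variable {𝕂 : Type*} [RCLike 𝕂] {lam₁ lam₂ : 𝕂}

/-- count of (disjoint) adjacent repeats -/
def K (i : ℕ → Fin 2) : ℕ → ℕ
  | 0 => 0
  | 1 => 0
  | (n+2) => if i (n+2) = i (n+1) then K i n + 1 else K i (n+1)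

lemma seqProd_zero (A : Fin 2 → Matrix (Fin 2) (Fin 2) 𝕂) (i : ℕ → Fin 2) :
    seqProd A i 0 = 1 := by
  rw [seqProd, wordProd_nil]

lemma seqProd_succ (A : Fin 2 → Matrix (Fin 2) (Fin 2) 𝕂) (i : ℕ → Fin 2) (n : ℕ) :
    seqProd A i (n+1) = A (i (n+1)) * seqProd A i n := by
  rw [seqProd, wordProd_succ]
  rfl

lemma Nm_smul (lam : 𝕂) (v : EuclideanSpace 𝕂 (Fin 2)) : Nm (lam • v) = ‖lam‖ * Nm v :=
  isNorm_Nm.2.1 lam v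

lemma Nm_sq (h₁ : ‖lam₁‖ ≤ 1) (h₂ : ‖lam₂‖ ≤ 1) (j : Fin 2) (w : EuclideanSpace 𝕂 (Fin 2)) :
    Nm (CLM (Am lam₁ lam₂ j) (CLM (Am lam₁ lam₂ j) w)) ≤ max ‖lam₁‖ ‖lam₂‖ * Nm w := by
  rcases fin2_eq j with rfl | rfl
  · rw [← clm_mul, sq0, clm_smul_one, Nm_smul]
    exact mul_le_mul_of_nonneg_right (le_max_left _ _) (Nm_nonneg w)
  · rw [← clm_mul, sq1, clm_smul_one, Nm_smul]
    exact mul_le_mul_of_nonneg_right (le_max_right _ _) (Nm_nonneg w)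

lemma K_bound (h₁ : ‖lam₁‖ ≤ 1) (h₂ : ‖lam₂‖ ≤ 1) (i : ℕ → Fin 2) :
    ∀ n, ∀ v, Nm (CLM (seqProd (Am lam₁ lam₂) i n) v) ≤
      (max ‖lam₁‖ ‖lam₂‖) ^ (K i n) * Nm v := by
  have hq : max ‖lam₁‖ ‖lam₂‖ ≤ 1 := max_le h₁ h₂
  have hq0 : 0 ≤ max ‖lam₁‖ ‖lam₂‖ := le_max_of_le_left (norm_nonneg _)
  intro n
  induction n using Nat.strong_induction_on with
  | _ n ih =>
    match n with
    | 0 =>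
        intro v
        rw [seqProd_zero, K]
        simp [CLM]
    | 1 =>
        intro v
        rw [seqProd_succ, seqProd_zero, mul_one, K]
        rw [pow_zero, one_mul]
        exact Nm_step h₁ h₂ _ v
    | (n+2) =>
        intro v
        by_cases hrep : i (n+2) = i (n+1)
        · rw [show K i (n+2) = K i n + 1 by rw [K, if_pos hrep]]
          rw [seqProd_succ, seqProd_succ, clm_mul, clm_mul, hrep]
          calc Nm (CLM (Am lam₁ lam₂ (i (n+1)))
                (CLM (Am lam₁ lam₂ (i (n+1))) (CLM (seqProd (Am lam₁ lam₂) i n) v)))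
              ≤ max ‖lam₁‖ ‖lam₂‖ * Nm (CLM (seqProd (Am lam₁ lam₂) i n) v) :=
                Nm_sq h₁ h₂ _ _
          _ ≤ max ‖lam₁‖ ‖lam₂‖ * ((max ‖lam₁‖ ‖lam₂‖) ^ (K i n) * Nm v) :=
                mul_le_mul_of_nonneg_left (ih n (by omega) v) hq0
          _ = (max ‖lam₁‖ ‖lam₂‖) ^ (K i n + 1) * Nm v := by ring
        · rw [show K i (n+2) = K i (n+1) by rw [K, if_neg hrep]]
          rw [seqProd_succ, clm_mul]
          exact le_trans (Nm_step h₁ h₂ _ _) (ih (n+1) (by omega) v)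

lemma K_mono_succ (i : ℕ → Fin 2) : ∀ n, K i n ≤ K i (n+1) ∧ K i (n+1) ≤ K i n + 1 := by
  intro n
  induction n using Nat.strong_induction_on with
  | _ n ih =>
    match n with
    | 0 => rw [show K i 0 = 0 from rfl, show K i 1 = 0 from rfl]; omega
    | (n+1) =>
        by_cases hrep : i (n+2) = i (n+1)
        · rw [show K i (n+2) = K i n + 1 by rw [K, if_pos hrep]]
          have h1 := ih n (by omega)
          omega
        · rw [show K i (n+2) = K i (n+1) by rw [K, if_neg hrep]]
          omega

lemma K_mono (i : ℕ → Fin 2) : Monotone (K i) :=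
  monotone_nat_of_le_succ (fun n => (K_mono_succ i n).1)

lemma K_unbounded (i : ℕ → Fin 2) (hr : ∀ m : ℕ, ∃ n, m ≤ n ∧ i (n+2) = i (n+1)) :
    ∀ k : ℕ, ∃ m, k ≤ K i m := by
  intro k
  induction k with
  | zero => exact ⟨0, by omega⟩
  | succ k ihk =>
      obtain ⟨m, hm⟩ := ihk
      obtain ⟨n, hn, hrep⟩ := hr m
      refine ⟨n + 2, ?_⟩
      rw [show K i (n+2) = K i n + 1 by rw [K, if_pos hrep]]
      have := K_mono i hn
      omega

/-- a sequence whose products do not decay is eventually strictly alternating -/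
lemma eventually_alternating (h₁ : ‖lam₁‖ < 1) (h₂ : ‖lam₂‖ < 1) (i : ℕ → Fin 2)
    (hyp : ∃ c > (0 : ℝ), ∀ m : ℕ, ∃ n, m ≤ n ∧
      c ≤ eNorm (seqProd (Am lam₁ lam₂) i n) / jsr (Am lam₁ lam₂) ^ n) :
    ∃ M : ℕ, ∀ n, M ≤ n → i (n+2) ≠ i (n+1) := by
  obtain ⟨c, hc, hcn⟩ := hyp
  by_contra hcon
  push_neg at hcon
  have hr : ∀ m : ℕ, ∃ n, m ≤ n ∧ i (n+2) = i (n+1) := by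
    intro m
    obtain ⟨n, hn1, hn2⟩ := hcon m
    exact ⟨n, hn1, hn2⟩
  set q := max ‖lam₁‖ ‖lam₂‖ with hqdef
  have hq1 : q < 1 := max_lt h₁ h₂
  have hq0 : 0 ≤ q := le_max_of_le_left (norm_nonneg _)
  obtain ⟨k, hk⟩ := exists_pow_lt_of_lt_one (show (0:ℝ) < c / Real.sqrt 2 by positivity) hq1
  obtain ⟨m, hm⟩ := K_unbounded i hr k
  obtain ⟨n, hnm, hcle⟩ := hcn m
  rw [jsr_eq_one h₁.le h₂.le, one_pow, div_one] at hcle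
  have hKn : k ≤ K i n := le_trans hm (K_mono i hnm)
  have hbound : eNorm (seqProd (Am lam₁ lam₂) i n) ≤ Real.sqrt 2 * q ^ (K i n) :=
    eNorm_le_of_Nm_bound (by positivity) (K_bound h₁.le h₂.le i n)
  have hqq : q ^ (K i n) ≤ q ^ k := pow_le_pow_of_le_one hq0 hq1.le hKn
  have hsqrt : (0:ℝ) < Real.sqrt 2 := by positivity
  have : Real.sqrt 2 * q ^ k < c := by
    rw [show c = Real.sqrt 2 * (c / Real.sqrt 2) by field_simp]
    exact mul_lt_mul_of_pos_left hk hsqrt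
  nlinarith [hcle, hbound, hqq]

lemma fin2_resolve (a b x : Fin 2) (hax : a ≠ x) (hbx : b ≠ x) : a = b := by omega

lemma fin2_choice (a b c : Fin 2) (hab : a ≠ b) : c = a ∨ c = b := by omega

lemma unbounded_agreements (h₁ : ‖lam₁‖ < 1) (h₂ : ‖lam₂‖ < 1) :
    UnboundedAgreements (Am lam₁ lam₂) := by
  intro N i₁ i₂ hyp₁ hyp₂
  obtain ⟨M₁, hM₁⟩ := eventually_alternating h₁ h₂ i₁ hyp₁
  obtain ⟨M₂, hM₂⟩ := eventually_alternating h₁ h₂ i₂ hyp₂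
  -- choose base points with matching letters
  have hne : i₂ (M₂+1) ≠ i₂ (M₂+2) := fun h => (hM₂ M₂ le_rfl) h.symm
  obtain ⟨n₂, hn₂ge, hbase⟩ : ∃ n₂, M₂ ≤ n₂ ∧ i₁ (M₁+1) = i₂ (n₂+1) := by
    rcases fin2_choice (i₂ (M₂+1)) (i₂ (M₂+2)) (i₁ (M₁+1)) hne with h | h
    · exact ⟨M₂, le_rfl, h⟩
    · exact ⟨M₂+1, by omega, h⟩
  refine ⟨M₁, n₂, ?_⟩
  have hstep : ∀ k : ℕ, i₁ (M₁ + k + 1) = i₂ (n₂ + k + 1) := by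
    intro k
    induction k with
    | zero => simpa using hbase
    | succ k ihk =>
        have ha : i₁ (M₁ + k + 2) ≠ i₁ (M₁ + k + 1) := hM₁ (M₁ + k) (by omega)
        have hb : i₂ (n₂ + k + 2) ≠ i₂ (n₂ + k + 1) := hM₂ (n₂ + k) (by omega)
        have : i₁ (M₁ + k + 2) = i₂ (n₂ + k + 2) := by
          apply fin2_resolve _ _ (i₁ (M₁ + k + 1)) ha
          rw [ihk]; exact hb
        rw [show M₁ + (k+1) + 1 = M₁ + k + 2 by omega, show n₂ + (k+1) + 1 = n₂ + k + 2 by omega]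
        exact this
  intro k hk1 hkN
  have := hstep (k - 1)
  rw [show M₁ + (k-1) + 1 = M₁ + k by omega, show n₂ + (k-1) + 1 = n₂ + k by omega] at this
  exact this

end Part7

namespace Part8
open JSRPaper Matrix Ex13 Part2 Part3 Part4 Part5 Part6 Part7

variable {𝕂 : Type*} [RCLike 𝕂] {lam₁ lam₂ : 𝕂}

lemma det_Am (j : Fin 2) : ‖(Am lam₁ lam₂ j).det‖ ≤ max ‖lam₁‖ ‖lam₂‖ := by
  rcases fin2_eq j with rfl | rfl
  · rw [Am0, show (!![0,1;lam₁,0] : Matrix (Fin 2) (Fin 2) 𝕂).det = -lam₁ by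
      rw [Matrix.det_fin_two_of]; ring]
    rw [norm_neg]
    exact le_max_left _ _
  · rw [Am1, show (!![0,lam₂;1,0] : Matrix (Fin 2) (Fin 2) 𝕂).det = -lam₂ by
      rw [Matrix.det_fin_two_of]; ring]
    rw [norm_neg]
    exact le_max_right _ _

lemma det_word (h₁ : ‖lam₁‖ < 1) (h₂ : ‖lam₂‖ < 1) {n : ℕ} (i : Fin n → Fin 2) :
    ‖(wordProd (Am lam₁ lam₂) i).det‖ ≤ (max ‖lam₁‖ ‖lam₂‖) ^ n := by
  induction n with
  | zero => rw [wordProd_nil]; simp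
  | succ n ih =>
      rw [wordProd_succ, Matrix.det_mul, pow_succ, norm_mul, mul_comm ((max ‖lam₁‖ ‖lam₂‖)^n)]
      exact mul_le_mul (det_Am _) (ih _) (norm_nonneg _)
        (le_max_of_le_left (norm_nonneg _))

lemma relProdBounded (h₁ : ‖lam₁‖ < 1) (h₂ : ‖lam₂‖ < 1) :
    RelProdBounded (Am lam₁ lam₂) := by
  constructor
  · rw [jsr_eq_one h₁.le h₂.le]; norm_num
  · refine ⟨Real.sqrt 2, fun n i => ?_⟩
    rw [jsr_eq_one h₁.le h₂.le, one_pow, mul_one]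
    exact eNorm_word_le h₁.le h₂.le i

lemma det_limit_zero (h₁ : ‖lam₁‖ < 1) (h₂ : ‖lam₂‖ < 1) {B : Matrix (Fin 2) (Fin 2) 𝕂}
    (hB : B ∈ limitSemigroup (Am lam₁ lam₂)) : B.det = 0 := by
  set q := max ‖lam₁‖ ‖lam₂‖ with hq
  have hq1 : q < 1 := max_lt h₁ h₂
  have hq0 : 0 ≤ q := le_max_of_le_left (norm_nonneg _)
  rw [← norm_eq_zero]
  apply le_antisymm _ (norm_nonneg _)
  apply le_of_forall_pos_le_add
  intro ε hε
  -- choose m with q^m < ε/2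
  obtain ⟨m, hm⟩ := exists_pow_lt_of_lt_one (show (0:ℝ) < ε/2 by positivity) hq1
  set δ := min (ε/20) 1 with hδ
  have hδ0 : 0 < δ := by
    rw [hδ]; apply lt_min (by positivity) one_pos
  obtain ⟨n, hnm, i, hdist⟩ := hB m δ hδ0
  rw [jsr_eq_one h₁.le h₂.le, one_pow, inv_one, one_smul] at hdist
  set P := wordProd (Am lam₁ lam₂) i with hP
  -- entry bounds
  have hent : ∀ j k : Fin 2, ‖P j k - B j k‖ < δ := by
    intro j k
    calc ‖P j k - B j k‖ = ‖(P - B) j k‖ := by rw [Matrix.sub_apply]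
    _ ≤ eNorm (P - B) := entry_le_eNorm _ j k
    _ < δ := hdist
  have hPent : ∀ j k : Fin 2, ‖P j k‖ ≤ 2 := by
    intro j k
    calc ‖P j k‖ ≤ eNorm P := entry_le_eNorm _ j k
    _ ≤ Real.sqrt 2 := eNorm_word_le h₁.le h₂.le i
    _ ≤ 2 := by
        nlinarith [Real.sq_sqrt (by norm_num : (0:ℝ) ≤ 2), Real.sqrt_nonneg 2]
  have hBent : ∀ j k : Fin 2, ‖B j k‖ ≤ 3 := by
    intro j k
    have h5 := hent j k
    have h6 := hPent j k
    have h7 : δ ≤ 1 := min_le_right _ _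
    calc ‖B j k‖ = ‖P j k - (P j k - B j k)‖ := by ring_nf
    _ ≤ ‖P j k‖ + ‖P j k - B j k‖ := norm_sub_le _ _
    _ ≤ 3 := by linarith
  -- |det B - det P| small
  have hdiff : B.det - P.det =
      B 0 0 * (B 1 1 - P 1 1) + P 1 1 * (B 0 0 - P 0 0) -
      (B 0 1 * (B 1 0 - P 1 0) + P 1 0 * (B 0 1 - P 0 1)) := by
    rw [Matrix.det_fin_two, Matrix.det_fin_two]
    ring
  have hnd : ‖B.det - P.det‖ ≤ 10 * δ := by
    rw [hdiff]
    have t1 : ‖B 0 0 * (B 1 1 - P 1 1)‖ ≤ 3 * δ := by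
      rw [norm_mul, ← norm_neg (B 1 1 - P 1 1)]
      have := hent 1 1
      rw [← norm_neg (P 1 1 - B 1 1)] at this
      apply mul_le_mul (hBent 0 0) _ (norm_nonneg _) (by norm_num)
      rw [show -(B 1 1 - P 1 1) = P 1 1 - B 1 1 by ring] at *
      exact le_of_lt (by simpa using hent 1 1)
    have t2 : ‖P 1 1 * (B 0 0 - P 0 0)‖ ≤ 2 * δ := by
      rw [norm_mul]
      apply mul_le_mul (hPent 1 1) _ (norm_nonneg _) (by norm_num)
      rw [show B 0 0 - P 0 0 = -(P 0 0 - B 0 0) by ring, norm_neg]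
      exact (hent 0 0).le
    have t3 : ‖B 0 1 * (B 1 0 - P 1 0)‖ ≤ 3 * δ := by
      rw [norm_mul]
      apply mul_le_mul (hBent 0 1) _ (norm_nonneg _) (by norm_num)
      rw [show B 1 0 - P 1 0 = -(P 1 0 - B 1 0) by ring, norm_neg]
      exact (hent 1 0).le
    have t4 : ‖P 1 0 * (B 0 1 - P 0 1)‖ ≤ 2 * δ := by
      rw [norm_mul]
      apply mul_le_mul (hPent 1 0) _ (norm_nonneg _) (by norm_num)
      rw [show B 0 1 - P 0 1 = -(P 0 1 - B 0 1) by ring, norm_neg]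
      exact (hent 0 1).le
    calc ‖B 0 0 * (B 1 1 - P 1 1) + P 1 1 * (B 0 0 - P 0 0) -
        (B 0 1 * (B 1 0 - P 1 0) + P 1 0 * (B 0 1 - P 0 1))‖
        ≤ ‖B 0 0 * (B 1 1 - P 1 1) + P 1 1 * (B 0 0 - P 0 0)‖ +
          ‖B 0 1 * (B 1 0 - P 1 0) + P 1 0 * (B 0 1 - P 0 1)‖ := norm_sub_le _ _
    _ ≤ (‖B 0 0 * (B 1 1 - P 1 1)‖ + ‖P 1 1 * (B 0 0 - P 0 0)‖) +
          (‖B 0 1 * (B 1 0 - P 1 0)‖ + ‖P 1 0 * (B 0 1 - P 0 1)‖) :=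
        add_le_add (norm_add_le _ _) (norm_add_le _ _)
    _ ≤ 10 * δ := by linarith
  have hdP : ‖P.det‖ ≤ ε/2 := by
    calc ‖P.det‖ ≤ q ^ n := det_word h₁ h₂ i
    _ ≤ q ^ m := pow_le_pow_of_le_one hq0 hq1.le hnm
    _ ≤ ε/2 := hm.le
  have hδε : 10 * δ ≤ ε/2 := by
    have : δ ≤ ε/20 := min_le_left _ _
    linarith
  calc ‖B.det‖ = ‖(B.det - P.det) + P.det‖ := by ring_nf
  _ ≤ ‖B.det - P.det‖ + ‖P.det‖ := norm_add_le _ _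
  _ ≤ 0 + ε := by linarith

lemma rank_one_of (hdet : ∀ {B : Matrix (Fin 2) (Fin 2) 𝕂}, B.det = 0 → True) : True := trivial

lemma rank_eq_one {B : Matrix (Fin 2) (Fin 2) 𝕂} (hdet : B.det = 0) (hB : B ≠ 0) :
    B.rank = 1 := by
  obtain ⟨v, hv0, hv⟩ := (Matrix.exists_mulVec_eq_zero_iff).mpr hdet
  have hfin : B.rank + Module.finrank 𝕂 (LinearMap.ker B.mulVecLin) =
      Module.finrank 𝕂 (Fin 2 → 𝕂) := by
    rw [Matrix.rank]
    exact LinearMap.finrank_range_add_finrank_ker B.mulVecLin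
  rw [Module.finrank_fintype_fun_eq_card, Fintype.card_fin] at hfin
  have hker : 0 < Module.finrank 𝕂 (LinearMap.ker B.mulVecLin) := by
    rw [Module.finrank_pos_iff]
    refine nontrivial_of_ne ⟨v, ?_⟩ 0 ?_
    · rw [LinearMap.mem_ker, Matrix.mulVecLin_apply]
      exact hv
    · intro h
      exact hv0 (congrArg Subtype.val h)
  have hrange : 0 < B.rank := by
    rw [Matrix.rank, Module.finrank_pos_iff]
    obtain ⟨j, k, hjk⟩ : ∃ j k, B j k ≠ 0 := by
      by_contra hall
      push_neg at hall
      exact hB (by ext j k; exact hall j k)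
    refine nontrivial_of_ne ⟨B.mulVecLin (Pi.single k 1), LinearMap.mem_range_self _ _⟩ 0 ?_
    intro h
    have h2 : B.mulVecLin (Pi.single k 1) = 0 := congrArg Subtype.val h
    have h3 : B.mulVecLin (Pi.single k 1) j = 0 := by rw [h2]; rfl
    simp only [Matrix.mulVecLin_apply, Matrix.mulVec_single, mul_one] at h3
    exact hjk (by simpa using h3)
  omega

lemma rankOneProp (h₁ : ‖lam₁‖ < 1) (h₂ : ‖lam₂‖ < 1) :
    RankOneProp (Am lam₁ lam₂) := by
  refine ⟨relProdBounded h₁ h₂, fun B hB hB0 => ?_⟩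
  exact rank_eq_one (det_limit_zero h₁ h₂ hB) hB0

end Part8



open JSRPaper in
/-- **Example 1.** For `A₁ = [[0,1],[λ₁,0]]`, `A₂ = [[0,λ₂],[1,0]]` with `|λ₁|,|λ₂| < 1`,
the pair `𝒜 = (A₁, A₂)` is irreducible, `ϱ(𝒜) = 1 = ρ(A₁A₂)`, the norm
`‖(x,y)‖ = max {|x|, |y|}` is a Barabanov norm and every Barabanov norm is a scalar
multiple of it, `𝒜` satisfies the strong finiteness hypothesis with characteristic word
`(1,2)`, and `𝒜` has the unbounded agreements and rank one properties. -/
theorem stmt_13 {𝕂 : Type*} [RCLike 𝕂] (lam₁ lam₂ : 𝕂)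
    (h₁ : ‖lam₁‖ < 1) (h₂ : ‖lam₂‖ < 1)
    (A : Fin 2 → Matrix (Fin 2) (Fin 2) 𝕂)
    (hA : A = ![!![0, 1; lam₁, 0], !![0, lam₂; 1, 0]])
    (N₀ : EuclideanSpace 𝕂 (Fin 2) → ℝ)
    (hN₀ : N₀ = fun v => max ‖v 0‖ ‖v 1‖) :
    IsIrreducible A ∧
    jsr A = 1 ∧
    specRad (A 0 * A 1) = 1 ∧
    IsBarabanov A N₀ ∧
    (∀ N : EuclideanSpace 𝕂 (Fin 2) → ℝ, IsBarabanov A N →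
      ∃ c > (0 : ℝ), ∀ v, N v = c * N₀ v) ∧
    StrongFinHyp A (![0, 1] : Fin 2 → Fin 2) ∧
    UnboundedAgreements A ∧
    RankOneProp A := by
  have hA' : A = Part2.Am lam₁ lam₂ := hA
  have hN' : N₀ = (Ex13.Nm : EuclideanSpace 𝕂 (Fin 2) → ℝ) := hN₀
  subst hA' hN'
  refine ⟨Part6.irreducible h₁ h₂, Part3.jsr_eq_one h₁.le h₂.le,
    Part3.specRad_eq_one h₁.le h₂.le, Part4.isBarabanov_Nm h₁.le h₂.le,
    fun N hN => Part5.unique_barabanov h₁ h₂ hN,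
    Part6.strongFinHyp h₁ h₂, Part7.unbounded_agreements h₁ h₂,
    Part8.rankOneProp h₁ h₂⟩
end
end

section
/- Let 𝕂 be ℝ or ℂ, let λ ∈ 𝕂 with 0 < |λ| < 1, and let A_1 = [[1,0],[0,λ]], A_2 = [[0,λ],[λ,0]]. Then the pair 𝒜 = (A_1, A_2) is irreducible with ϱ(𝒜) = 1, 𝒜 has the finiteness property, the unbounded agreements property and the rank one property, the norm ‖(x,y)ᵀ‖ = max{|x|, |λ y|} is a Barabanov norm for 𝒜, but 𝒜 does not satisfy the strong finiteness hypothesis (no word ω ∈ {1,2}^n for any n is a characteristic word for 𝒜). -/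
open Filter Topology

noncomputable section

namespace JSRPaper
namespace Helpers
set_option linter.unusedSectionVars false in
section
variable {𝕂 : Type*} [RCLike 𝕂] {ι : Type*} [Fintype ι] [DecidableEq ι] {r : ℕ}

lemma clm_apply (M : Matrix (Fin 2) (Fin 2) 𝕂) (v : EuclideanSpace 𝕂 (Fin 2)) (j : Fin 2) :
    (Matrix.toEuclideanCLM (𝕜 := 𝕂) M v) j = M j 0 * v 0 + M j 1 * v 1 := by
  show (Matrix.toLin' M (WithLp.equiv _ _ v)) j = _
  simp [Matrix.toLin'_apply, Matrix.mulVec, dotProduct, Fin.sum_univ_two]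

lemma euclid_ext {v w : EuclideanSpace 𝕂 (Fin 2)} (e0 : v 0 = w 0) (e1 : v 1 = w 1) : v = w := by
  ext j; fin_cases j <;> assumption

lemma euclid_norm (v : EuclideanSpace 𝕂 (Fin 2)) :
    ‖v‖ = Real.sqrt (‖v 0‖ ^ 2 + ‖v 1‖ ^ 2) := by
  rw [EuclideanSpace.norm_eq, Fin.sum_univ_two]

lemma coord_le_norm (v : EuclideanSpace 𝕂 (Fin 2)) (j : Fin 2) : ‖v j‖ ≤ ‖v‖ := by
  rw [euclid_norm]
  have h0 : (0:ℝ) ≤ ‖v 0‖ ^ 2 := sq_nonneg _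
  have h1 : (0:ℝ) ≤ ‖v 1‖ ^ 2 := sq_nonneg _
  fin_cases j
  · calc ‖v 0‖ = Real.sqrt (‖v 0‖ ^ 2) := (Real.sqrt_sq (norm_nonneg _)).symm
      _ ≤ _ := Real.sqrt_le_sqrt (by linarith)
  · calc ‖v 1‖ = Real.sqrt (‖v 1‖ ^ 2) := (Real.sqrt_sq (norm_nonneg _)).symm
      _ ≤ _ := Real.sqrt_le_sqrt (by linarith)

lemma norm_le_of_sq {v w : EuclideanSpace 𝕂 (Fin 2)} {c : ℝ} (hc : 0 ≤ c)
    (h : ‖w 0‖ ^ 2 + ‖w 1‖ ^ 2 ≤ c ^ 2 * (‖v 0‖ ^ 2 + ‖v 1‖ ^ 2)) : ‖w‖ ≤ c * ‖v‖ := by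
  rw [euclid_norm, euclid_norm]
  calc Real.sqrt (‖w 0‖ ^ 2 + ‖w 1‖ ^ 2) ≤ Real.sqrt (c ^ 2 * (‖v 0‖ ^ 2 + ‖v 1‖ ^ 2)) :=
        Real.sqrt_le_sqrt h
    _ = c * Real.sqrt (‖v 0‖ ^ 2 + ‖v 1‖ ^ 2) := by
        rw [Real.sqrt_mul (sq_nonneg c), Real.sqrt_sq hc]

lemma wordProd_succ {n : ℕ} (A : Fin r → Matrix ι ι 𝕂) (i : Fin (n+1) → Fin r) :
    wordProd A i = A (i (Fin.last n)) * wordProd A (fun k : Fin n => i k.castSucc) := by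
  unfold wordProd
  rw [List.ofFn_succ']
  simp

lemma wordProd_head {n : ℕ} (A : Fin r → Matrix ι ι 𝕂) (i : Fin (n+1) → Fin r) :
    wordProd A i = wordProd A (fun k : Fin n => i k.succ) * A (i 0) := by
  unfold wordProd
  rw [List.ofFn_succ]
  simp

lemma wordProd_nil (A : Fin r → Matrix ι ι 𝕂) (i : Fin 0 → Fin r) :
    wordProd A i = 1 := by simp [wordProd]

lemma wordProd_const (A : Fin r → Matrix ι ι 𝕂) (c : Fin r) (n : ℕ) :
    wordProd A (fun _ : Fin n => c) = A c ^ n := by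
  induction n with
  | zero => simp [wordProd]
  | succ m ih => rw [wordProd_succ, pow_succ']; exact congrArg _ ih

lemma eNorm_nonneg (M : Matrix ι ι 𝕂) : 0 ≤ eNorm M := norm_nonneg _

lemma eNorm_mul_le (M M' : Matrix ι ι 𝕂) : eNorm (M * M') ≤ eNorm M * eNorm M' := by
  unfold eNorm
  rw [map_mul]
  exact ContinuousLinearMap.opNorm_comp_le _ _

lemma eNorm_one_le : eNorm (1 : Matrix ι ι 𝕂) ≤ 1 := by
  unfold eNorm
  rw [map_one]
  exact ContinuousLinearMap.norm_id_le

lemma entry_le_eNorm (M : Matrix (Fin 2) (Fin 2) 𝕂) (i j : Fin 2) : ‖M i j‖ ≤ eNorm M := by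
  have h := clm_apply M (EuclideanSpace.single j 1) i
  have hj : (Matrix.toEuclideanCLM (𝕜 := 𝕂) M (EuclideanSpace.single j 1)) i = M i j := by
    rw [h]
    fin_cases j <;> simp [EuclideanSpace.single_apply]
  calc ‖M i j‖ = ‖(Matrix.toEuclideanCLM (𝕜 := 𝕂) M (EuclideanSpace.single j 1)) i‖ := by rw [hj]
    _ ≤ ‖Matrix.toEuclideanCLM (𝕜 := 𝕂) M (EuclideanSpace.single j 1)‖ := coord_le_norm _ _
    _ ≤ eNorm M * ‖EuclideanSpace.single j (1:𝕂)‖ := ContinuousLinearMap.le_opNorm _ _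
    _ = eNorm M := by rw [EuclideanSpace.norm_single]; simp

lemma iSup_fin2 (f : Fin 2 → ℝ) : (⨆ i, f i) = max (f 0) (f 1) := by
  apply le_antisymm
  · exact ciSup_le (fun i => by fin_cases i; exacts [le_max_left _ _, le_max_right _ _])
  · have hb : BddAbove (Set.range f) := Set.Finite.bddAbove (Set.finite_range _)
    exact max_le (le_ciSup hb 0) (le_ciSup hb 1)

/-- The Barabanov norm candidate. -/
def Nb (lam : 𝕂) (v : EuclideanSpace 𝕂 (Fin 2)) : ℝ := max ‖v 0‖ (‖lam‖ * ‖v 1‖)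

variable {lam : 𝕂}

lemma Nb_nonneg (v : EuclideanSpace 𝕂 (Fin 2)) : 0 ≤ Nb lam v :=
  le_trans (norm_nonneg _) (le_max_left _ _)

lemma coord0_le_Nb (v : EuclideanSpace 𝕂 (Fin 2)) : ‖v 0‖ ≤ Nb lam v := le_max_left _ _

lemma coord1_le_Nb (h0 : 0 < ‖lam‖) (v : EuclideanSpace 𝕂 (Fin 2)) :
    ‖v 1‖ ≤ ‖lam‖⁻¹ * Nb lam v := by
  have h := le_max_right ‖v 0‖ (‖lam‖ * ‖v 1‖)
  calc ‖v 1‖ = ‖lam‖⁻¹ * (‖lam‖ * ‖v 1‖) := by field_simp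
    _ ≤ ‖lam‖⁻¹ * Nb lam v :=
        mul_le_mul_of_nonneg_left h (inv_nonneg.2 (norm_nonneg _))

variable {A : Fin 2 → Matrix (Fin 2) (Fin 2) 𝕂}

lemma a0_apply (hA : A = ![!![1, 0; 0, lam], !![0, lam; lam, 0]])
    (v : EuclideanSpace 𝕂 (Fin 2)) :
    (Matrix.toEuclideanCLM (𝕜 := 𝕂) (A 0) v) 0 = v 0 ∧
    (Matrix.toEuclideanCLM (𝕜 := 𝕂) (A 0) v) 1 = lam * v 1 := by
  subst hA; constructor <;> rw [clm_apply] <;> simp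

lemma a1_apply (hA : A = ![!![1, 0; 0, lam], !![0, lam; lam, 0]])
    (v : EuclideanSpace 𝕂 (Fin 2)) :
    (Matrix.toEuclideanCLM (𝕜 := 𝕂) (A 1) v) 0 = lam * v 1 ∧
    (Matrix.toEuclideanCLM (𝕜 := 𝕂) (A 1) v) 1 = lam * v 0 := by
  subst hA; constructor <;> rw [clm_apply] <;> simp

lemma Nb_Ai_le (h1 : ‖lam‖ < 1) (hA : A = ![!![1, 0; 0, lam], !![0, lam; lam, 0]])
    (i : Fin 2) (v : EuclideanSpace 𝕂 (Fin 2)) :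
    Nb lam (Matrix.toEuclideanCLM (𝕜 := 𝕂) (A i) v) ≤ Nb lam v := by
  have hl0 : (0:ℝ) ≤ ‖lam‖ := norm_nonneg _
  have hv0 : (0:ℝ) ≤ ‖v 0‖ := norm_nonneg _
  have hv1 : (0:ℝ) ≤ ‖v 1‖ := norm_nonneg _
  have hi : i = 0 ∨ i = 1 := by omega
  rcases hi with rfl | rfl
  · obtain ⟨e0, e1⟩ := a0_apply hA v
    show max _ _ ≤ max _ _
    rw [e0, e1, norm_mul]
    apply max_le (le_max_left _ _)
    calc ‖lam‖ * (‖lam‖ * ‖v 1‖) ≤ 1 * (‖lam‖ * ‖v 1‖) := by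
          nlinarith [mul_nonneg hl0 hv1]
      _ = ‖lam‖ * ‖v 1‖ := one_mul _
      _ ≤ _ := le_max_right _ _
  · obtain ⟨e0, e1⟩ := a1_apply hA v
    show max _ _ ≤ max _ _
    rw [e0, e1, norm_mul, norm_mul]
    apply max_le (le_max_right _ _)
    calc ‖lam‖ * (‖lam‖ * ‖v 0‖) ≤ 1 * (1 * ‖v 0‖) := by
          nlinarith [mul_nonneg hl0 hv0]
      _ = ‖v 0‖ := by ring
      _ ≤ _ := le_max_left _ _

lemma Nb_sup_eq (h1 : ‖lam‖ < 1) (hA : A = ![!![1, 0; 0, lam], !![0, lam; lam, 0]])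
    (v : EuclideanSpace 𝕂 (Fin 2)) :
    (⨆ i : Fin 2, Nb lam (Matrix.toEuclideanCLM (𝕜 := 𝕂) (A i) v)) = Nb lam v := by
  rw [iSup_fin2]
  apply le_antisymm
  · exact max_le (Nb_Ai_le h1 hA 0 v) (Nb_Ai_le h1 hA 1 v)
  · obtain ⟨e00, e01⟩ := a0_apply hA v
    obtain ⟨e10, e11⟩ := a1_apply hA v
    apply max_le
    · calc ‖v 0‖ ≤ Nb lam (Matrix.toEuclideanCLM (𝕜 := 𝕂) (A 0) v) := by
            rw [Nb, e00]; exact le_max_left _ _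
        _ ≤ _ := le_max_left _ _
    · calc ‖lam‖ * ‖v 1‖ = ‖lam * v 1‖ := (norm_mul _ _).symm
        _ ≤ Nb lam (Matrix.toEuclideanCLM (𝕜 := 𝕂) (A 1) v) := by
            rw [Nb, e10]; exact le_max_left _ _
        _ ≤ _ := le_max_right _ _

lemma Nb_le_norm (h1 : ‖lam‖ < 1) (v : EuclideanSpace 𝕂 (Fin 2)) : Nb lam v ≤ ‖v‖ := by
  apply max_le (coord_le_norm v 0)
  calc ‖lam‖ * ‖v 1‖ ≤ 1 * ‖v 1‖ :=
        mul_le_mul_of_nonneg_right h1.le (norm_nonneg _)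
    _ = ‖v 1‖ := one_mul _
    _ ≤ ‖v‖ := coord_le_norm v 1

lemma norm_le_Nb (h0 : 0 < ‖lam‖) (v : EuclideanSpace 𝕂 (Fin 2)) :
    ‖v‖ ≤ (1 + ‖lam‖⁻¹) * Nb lam v := by
  have hs : ‖v‖ ≤ ‖v 0‖ + ‖v 1‖ := by
    rw [euclid_norm]
    have h := Real.sqrt_le_sqrt (show ‖v 0‖^2 + ‖v 1‖^2 ≤ (‖v 0‖ + ‖v 1‖)^2 by
      nlinarith [mul_nonneg (norm_nonneg (v 0)) (norm_nonneg (v 1))])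
    rwa [Real.sqrt_sq (by positivity)] at h
  calc ‖v‖ ≤ ‖v 0‖ + ‖v 1‖ := hs
    _ ≤ Nb lam v + ‖lam‖⁻¹ * Nb lam v := add_le_add (coord0_le_Nb v) (coord1_le_Nb h0 v)
    _ = (1 + ‖lam‖⁻¹) * Nb lam v := by ring

lemma Nb_wordProd_le (h1 : ‖lam‖ < 1) (hA : A = ![!![1, 0; 0, lam], !![0, lam; lam, 0]])
    {n : ℕ} (i : Fin n → Fin 2) (v : EuclideanSpace 𝕂 (Fin 2)) :
    Nb lam (Matrix.toEuclideanCLM (𝕜 := 𝕂) (wordProd A i) v) ≤ Nb lam v := by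
  induction n with
  | zero =>
    rw [wordProd_nil, map_one]
    exact le_of_eq rfl
  | succ m ih =>
    rw [wordProd_succ, map_mul]
    calc Nb lam ((Matrix.toEuclideanCLM (𝕜 := 𝕂) (A (i (Fin.last m))) *
          Matrix.toEuclideanCLM (𝕜 := 𝕂) (wordProd A fun k : Fin m => i k.castSucc)) v)
        = Nb lam (Matrix.toEuclideanCLM (𝕜 := 𝕂) (A (i (Fin.last m)))
            (Matrix.toEuclideanCLM (𝕜 := 𝕂) (wordProd A fun k : Fin m => i k.castSucc) v)) := rfl
      _ ≤ Nb lam (Matrix.toEuclideanCLM (𝕜 := 𝕂) (wordProd A fun k : Fin m => i k.castSucc) v) :=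
          Nb_Ai_le h1 hA _ _
      _ ≤ Nb lam v := ih _

lemma eNorm_wordProd_le (h0 : 0 < ‖lam‖) (h1 : ‖lam‖ < 1)
    (hA : A = ![!![1, 0; 0, lam], !![0, lam; lam, 0]]) {n : ℕ} (i : Fin n → Fin 2) :
    eNorm (wordProd A i) ≤ 1 + ‖lam‖⁻¹ := by
  have hC : (0:ℝ) ≤ 1 + ‖lam‖⁻¹ := by positivity
  apply ContinuousLinearMap.opNorm_le_bound _ hC
  intro v
  calc ‖Matrix.toEuclideanCLM (𝕜 := 𝕂) (wordProd A i) v‖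
      ≤ (1 + ‖lam‖⁻¹) * Nb lam (Matrix.toEuclideanCLM (𝕜 := 𝕂) (wordProd A i) v) :=
        norm_le_Nb h0 _
    _ ≤ (1 + ‖lam‖⁻¹) * Nb lam v :=
        mul_le_mul_of_nonneg_left (Nb_wordProd_le h1 hA i v) hC
    _ ≤ (1 + ‖lam‖⁻¹) * ‖v‖ :=
        mul_le_mul_of_nonneg_left (Nb_le_norm h1 v) hC

lemma a0_fix (hA : A = ![!![1, 0; 0, lam], !![0, lam; lam, 0]]) :
    Matrix.toEuclideanCLM (𝕜 := 𝕂) (A 0) (EuclideanSpace.single (0 : Fin 2) (1:𝕂)) =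
      EuclideanSpace.single (0 : Fin 2) (1:𝕂) := by
  obtain ⟨e0, e1⟩ := a0_apply hA (EuclideanSpace.single (0 : Fin 2) (1:𝕂))
  refine euclid_ext ?_ ?_ <;>
    simp only [e0, e1, EuclideanSpace.single_apply] <;> simp

lemma pow_fix (hA : A = ![!![1, 0; 0, lam], !![0, lam; lam, 0]]) (n : ℕ) :
    Matrix.toEuclideanCLM (𝕜 := 𝕂) (wordProd A (fun _ : Fin n => (0 : Fin 2)))
      (EuclideanSpace.single (0 : Fin 2) (1:𝕂)) = EuclideanSpace.single (0 : Fin 2) (1:𝕂) := by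
  induction n with
  | zero => rw [wordProd_nil, map_one]; rfl
  | succ m ih =>
    rw [wordProd_succ, map_mul]
    show Matrix.toEuclideanCLM (𝕜 := 𝕂) (A 0)
      (Matrix.toEuclideanCLM (𝕜 := 𝕂) (wordProd A (fun _ : Fin m => (0 : Fin 2)))
        (EuclideanSpace.single (0 : Fin 2) (1:𝕂))) = _
    rw [ih, a0_fix hA]

lemma one_le_eNorm_zeroWord (hA : A = ![!![1, 0; 0, lam], !![0, lam; lam, 0]]) (n : ℕ) :
    1 ≤ eNorm (wordProd A (fun _ : Fin n => (0 : Fin 2))) := by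
  have hfix := pow_fix hA n
  have hn : ‖EuclideanSpace.single (0 : Fin 2) (1:𝕂)‖ = 1 := by
    rw [EuclideanSpace.norm_single]; simp
  have h := ContinuousLinearMap.le_opNorm
    (Matrix.toEuclideanCLM (𝕜 := 𝕂) (wordProd A (fun _ : Fin n => (0 : Fin 2))))
    (EuclideanSpace.single (0 : Fin 2) (1:𝕂))
  rw [hfix, hn, mul_one] at h
  exact h


variable {lam : 𝕂} {A : Fin 2 → Matrix (Fin 2) (Fin 2) 𝕂}

lemma one_le_sup (h0 : 0 < ‖lam‖) (h1 : ‖lam‖ < 1)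
    (hA : A = ![!![1, 0; 0, lam], !![0, lam; lam, 0]]) (n : ℕ) :
    1 ≤ ⨆ i : Fin n → Fin 2, eNorm (wordProd A i) := by
  have hb : BddAbove (Set.range fun i : Fin n → Fin 2 => eNorm (wordProd A i)) :=
    Set.Finite.bddAbove (Set.finite_range _)
  exact le_trans (one_le_eNorm_zeroWord hA n) (le_ciSup hb _)

lemma sup_le_C (h0 : 0 < ‖lam‖) (h1 : ‖lam‖ < 1)
    (hA : A = ![!![1, 0; 0, lam], !![0, lam; lam, 0]]) (n : ℕ) :
    (⨆ i : Fin n → Fin 2, eNorm (wordProd A i)) ≤ 1 + ‖lam‖⁻¹ := by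
  exact ciSup_le (fun i => eNorm_wordProd_le h0 h1 hA i)

lemma jsr_eq_one (h0 : 0 < ‖lam‖) (h1 : ‖lam‖ < 1)
    (hA : A = ![!![1, 0; 0, lam], !![0, lam; lam, 0]]) : jsr A = 1 := by
  have hC0 : (0:ℝ) < 1 + ‖lam‖⁻¹ := by positivity
  -- lower bound
  have hlow : (1:ℝ) ≤ jsr A := by
    apply le_ciInf
    intro n
    have hs := one_le_sup h0 h1 hA (n : ℕ)
    calc (1:ℝ) = 1 ^ ((n:ℝ)⁻¹) := (Real.one_rpow _).symm
      _ ≤ _ := Real.rpow_le_rpow zero_le_one hs (by positivity)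
  have hbdd : BddBelow (Set.range fun n : ℕ+ =>
      (⨆ i : Fin (n : ℕ) → Fin 2, eNorm (wordProd A i)) ^ ((n : ℝ)⁻¹)) := by
    refine ⟨0, ?_⟩
    rintro x ⟨n, rfl⟩
    have := one_le_sup h0 h1 hA (n : ℕ)
    positivity
  have hup : ∀ n : ℕ+, jsr A ≤ (1 + ‖lam‖⁻¹) ^ ((n : ℝ)⁻¹) := by
    intro n
    calc jsr A ≤ (⨆ i : Fin (n : ℕ) → Fin 2, eNorm (wordProd A i)) ^ ((n : ℝ)⁻¹) :=
          ciInf_le hbdd n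
      _ ≤ (1 + ‖lam‖⁻¹) ^ ((n : ℝ)⁻¹) := by
          apply Real.rpow_le_rpow _ (sup_le_C h0 h1 hA _) (by positivity)
          exact le_trans zero_le_one (one_le_sup h0 h1 hA _)
  -- limit argument
  have htend : Tendsto (fun n : ℕ => (1 + ‖lam‖⁻¹) ^ (((n:ℝ) + 1)⁻¹)) atTop (𝓝 1) := by
    have h1' : Tendsto (fun n : ℕ => ((n:ℝ) + 1)⁻¹) atTop (𝓝 0) := by
      have := tendsto_one_div_add_atTop_nhds_zero_nat (𝕜 := ℝ)
      simpa [one_div] using this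
    have h2' : Tendsto (fun n : ℕ => Real.log (1 + ‖lam‖⁻¹) * ((n:ℝ) + 1)⁻¹) atTop (𝓝 0) := by
      simpa using h1'.const_mul (Real.log (1 + ‖lam‖⁻¹))
    have h3' : Tendsto (fun n : ℕ =>
        Real.exp (Real.log (1 + ‖lam‖⁻¹) * ((n:ℝ) + 1)⁻¹)) atTop (𝓝 1) := by
      simpa [Function.comp_def] using (Real.continuous_exp.tendsto 0).comp h2'
    refine h3'.congr (fun n => ?_)
    rw [Real.rpow_def_of_pos hC0]
  have hup' : jsr A ≤ 1 := by
    apply ge_of_tendsto htend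
    filter_upwards with n
    have := hup ⟨n + 1, Nat.succ_pos n⟩
    simpa using this
  linarith

variable {lam : 𝕂} {A : Fin 2 → Matrix (Fin 2) (Fin 2) 𝕂}

lemma eNorm_A0_le_one (h1 : ‖lam‖ < 1)
    (hA : A = ![!![1, 0; 0, lam], !![0, lam; lam, 0]]) : eNorm (A 0) ≤ 1 := by
  apply ContinuousLinearMap.opNorm_le_bound _ zero_le_one
  intro v
  rw [one_mul]
  have h := norm_le_of_sq (v := v) (w := Matrix.toEuclideanCLM (𝕜 := 𝕂) (A 0) v)
    (c := 1) zero_le_one ?_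
  · simpa using h
  · obtain ⟨e0, e1⟩ := a0_apply hA v
    rw [e0, e1, norm_mul]
    have hl0 : (0:ℝ) ≤ ‖lam‖ := norm_nonneg _
    have hsq : ‖lam‖ ^ 2 ≤ 1 := by nlinarith
    nlinarith [mul_le_mul_of_nonneg_right hsq (sq_nonneg (‖v 1‖)), sq_nonneg (‖v 1‖),
      mul_pow ‖lam‖ ‖v 1‖ 2]

lemma eNorm_A1_le (h1 : ‖lam‖ < 1)
    (hA : A = ![!![1, 0; 0, lam], !![0, lam; lam, 0]]) : eNorm (A 1) ≤ ‖lam‖ := by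
  apply ContinuousLinearMap.opNorm_le_bound _ (norm_nonneg lam)
  intro v
  apply norm_le_of_sq (norm_nonneg lam)
  obtain ⟨e0, e1⟩ := a1_apply hA v
  rw [e0, e1, norm_mul, norm_mul]
  ring_nf
  nlinarith [sq_nonneg (‖v 0‖), sq_nonneg (‖v 1‖)]

lemma eNorm_pow_le_one {M : Matrix (Fin 2) (Fin 2) 𝕂} (h : eNorm M ≤ 1) (k : ℕ) :
    eNorm (M ^ k) ≤ 1 := by
  induction k with
  | zero => simpa using eNorm_one_le
  | succ m ih =>
    rw [pow_succ]
    calc eNorm (M ^ m * M) ≤ eNorm (M ^ m) * eNorm M := eNorm_mul_le _ _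
      _ ≤ 1 * 1 := mul_le_mul ih h (eNorm_nonneg _) zero_le_one
      _ = 1 := one_mul 1

lemma eNorm_A0_pow (h1 : ‖lam‖ < 1)
    (hA : A = ![!![1, 0; 0, lam], !![0, lam; lam, 0]]) (k : ℕ) :
    eNorm ((A 0) ^ k) = 1 := by
  apply le_antisymm (eNorm_pow_le_one (eNorm_A0_le_one h1 hA) k)
  have := one_le_eNorm_zeroWord hA k
  rwa [wordProd_const] at this

lemma specRad_A0 (h1 : ‖lam‖ < 1)
    (hA : A = ![!![1, 0; 0, lam], !![0, lam; lam, 0]]) : specRad (A 0) = 1 := by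
  unfold specRad
  have h : ∀ k : ℕ+, eNorm ((A 0) ^ (k:ℕ)) ^ ((((k:ℕ)):ℝ))⁻¹ = 1 := by
    intro k
    rw [eNorm_A0_pow h1 hA, Real.one_rpow]
  simp_rw [h]
  exact ciInf_const

lemma seqProd_succ (i : ℕ → Fin 2) (n : ℕ) :
    seqProd A i (n + 1) = A (i (n + 1)) * seqProd A i n := by
  unfold seqProd
  rw [wordProd_succ]
  rfl

lemma eNorm_seqProd_le (h1 : ‖lam‖ < 1)
    (hA : A = ![!![1, 0; 0, lam], !![0, lam; lam, 0]]) (i : ℕ → Fin 2) (n : ℕ) :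
    eNorm (seqProd A i n) ≤
      ‖lam‖ ^ ((Finset.range n).filter (fun k => i (k+1) = 1)).card := by
  have hl0 : (0:ℝ) ≤ ‖lam‖ := norm_nonneg _
  induction n with
  | zero =>
    simpa [seqProd, wordProd_nil] using (eNorm_one_le : eNorm (1 : Matrix (Fin 2) (Fin 2) 𝕂) ≤ 1)
  | succ m ih =>
    rw [seqProd_succ, Finset.range_add_one, Finset.filter_insert]
    have key := eNorm_mul_le (A (i (m+1))) (seqProd A i m)
    have h2 : i (m+1) = 0 ∨ i (m+1) = 1 := by omega
    rcases h2 with hz | hz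
    · rw [if_neg (by simp [hz])]
      calc eNorm _ ≤ eNorm (A (i (m+1))) * eNorm (seqProd A i m) := key
        _ ≤ 1 * ‖lam‖ ^ _ := by
            apply mul_le_mul _ ih (eNorm_nonneg _) zero_le_one
            rw [hz]; exact eNorm_A0_le_one h1 hA
        _ = _ := one_mul _
    · rw [if_pos (by simp [hz]),
        Finset.card_insert_of_notMem (by simp)]
      calc eNorm _ ≤ eNorm (A (i (m+1))) * eNorm (seqProd A i m) := key
        _ ≤ ‖lam‖ * ‖lam‖ ^ _ := by
            apply mul_le_mul _ ih (eNorm_nonneg _) hl0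
            rw [hz]; exact eNorm_A1_le h1 hA
        _ = _ := (pow_succ' _ _).symm

lemma norm_det_A (h1 : ‖lam‖ < 1)
    (hA : A = ![!![1, 0; 0, lam], !![0, lam; lam, 0]]) (j : Fin 2) :
    ‖(A j).det‖ ≤ ‖lam‖ := by
  have hl0 : (0:ℝ) ≤ ‖lam‖ := norm_nonneg _
  have h2 : j = 0 ∨ j = 1 := by omega
  subst hA
  rcases h2 with rfl | rfl
  · rw [show (![!![(1:𝕂), 0; 0, lam], !![0, lam; lam, 0]]) 0 = !![(1:𝕂), 0; 0, lam] from rfl,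
      Matrix.det_fin_two_of]
    rw [show (1:𝕂) * lam - 0 * 0 = lam by ring]
  · rw [show (![!![(1:𝕂), 0; 0, lam], !![0, lam; lam, 0]]) 1 = !![(0:𝕂), lam; lam, 0] from rfl,
      Matrix.det_fin_two_of]
    rw [show (0:𝕂) * 0 - lam * lam = -(lam * lam) by ring, norm_neg, norm_mul]
    nlinarith

lemma norm_det_wordProd_le (h1 : ‖lam‖ < 1)
    (hA : A = ![!![1, 0; 0, lam], !![0, lam; lam, 0]]) {n : ℕ} (i : Fin n → Fin 2) :
    ‖(wordProd A i).det‖ ≤ ‖lam‖ ^ n := by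
  have hl0 : (0:ℝ) ≤ ‖lam‖ := norm_nonneg _
  induction n with
  | zero => simp [wordProd_nil]
  | succ m ih =>
    rw [wordProd_succ, Matrix.det_mul, norm_mul, pow_succ']
    exact mul_le_mul (norm_det_A h1 hA _) (ih _) (norm_nonneg _) hl0

lemma eq_zero_of_rank_eq_zero {M : Matrix (Fin 2) (Fin 2) 𝕂} (h : M.rank = 0) : M = 0 := by
  rw [Matrix.rank, Submodule.finrank_eq_zero, LinearMap.range_eq_bot] at h
  ext i j
  have h2 := congrFun (LinearMap.congr_fun h (Pi.single j (1:𝕂))) i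
  rw [Matrix.mulVecLin_apply, Matrix.mulVec_single] at h2
  simpa using h2

lemma rank_one_of_det_eq_zero {B : Matrix (Fin 2) (Fin 2) 𝕂} (hB : B ≠ 0)
    (hd : B.det = 0) : B.rank = 1 := by
  have hadj : B * B.adjugate = 0 := by
    rw [Matrix.mul_adjugate, hd, zero_smul]
  have hadj_ne : B.adjugate ≠ 0 := by
    intro h
    apply hB
    rw [Matrix.adjugate_fin_two] at h
    have e00 : B 1 1 = 0 := by simpa using congrFun (congrFun h 0) 0
    have e01 : B 0 1 = 0 := by simpa using congrFun (congrFun h 0) 1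
    have e10 : B 1 0 = 0 := by simpa using congrFun (congrFun h 1) 0
    have e11 : B 0 0 = 0 := by simpa using congrFun (congrFun h 1) 1
    ext i j
    fin_cases i <;> fin_cases j <;> simp [e00, e01, e10, e11]
  have hcard := Matrix.rank_add_rank_le_card_of_mul_eq_zero hadj
  rw [Fintype.card_fin] at hcard
  have h1r : 1 ≤ B.rank := by
    rcases Nat.eq_zero_or_pos B.rank with h | h
    · exact absurd (eq_zero_of_rank_eq_zero h) hB
    · exact h
  have h2r : 1 ≤ B.adjugate.rank := by
    rcases Nat.eq_zero_or_pos B.adjugate.rank with h | h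
    · exact absurd (eq_zero_of_rank_eq_zero h) hadj_ne
    · exact h
  omega

lemma IsNorm_Nb (h0 : 0 < ‖lam‖) : IsNorm (Nb lam : EuclideanSpace 𝕂 (Fin 2) → ℝ) := by
  refine ⟨?_, ?_, ?_⟩
  · intro v
    constructor
    · intro h
      have hv0 : ‖v 0‖ = 0 :=
        le_antisymm (h ▸ coord0_le_Nb v) (norm_nonneg _)
      have hv1 : ‖v 1‖ = 0 := by
        have := coord1_le_Nb h0 v
        rw [h, mul_zero] at this
        exact le_antisymm this (norm_nonneg _)
      exact euclid_ext (norm_eq_zero.mp hv0) (norm_eq_zero.mp hv1)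
    · rintro rfl
      show max ‖(0 : EuclideanSpace 𝕂 (Fin 2)) 0‖ (‖lam‖ * ‖(0 : EuclideanSpace 𝕂 (Fin 2)) 1‖) = 0
      norm_num
  · intro c v
    show max ‖(c • v) 0‖ (‖lam‖ * ‖(c • v) 1‖) = ‖c‖ * max ‖v 0‖ (‖lam‖ * ‖v 1‖)
    have e0 : (c • v) 0 = c * v 0 := rfl
    have e1 : (c • v) 1 = c * v 1 := rfl
    rw [e0, e1, norm_mul, norm_mul, show ‖lam‖ * (‖c‖ * ‖v 1‖) = ‖c‖ * (‖lam‖ * ‖v 1‖) by ring]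
    exact (mul_max_of_nonneg _ _ (norm_nonneg c)).symm
  · intro u v
    show max ‖(u + v) 0‖ (‖lam‖ * ‖(u + v) 1‖) ≤ Nb lam u + Nb lam v
    have e0 : (u + v) 0 = u 0 + v 0 := rfl
    have e1 : (u + v) 1 = u 1 + v 1 := rfl
    rw [e0, e1]
    apply max_le
    · calc ‖u 0 + v 0‖ ≤ ‖u 0‖ + ‖v 0‖ := norm_add_le _ _
        _ ≤ _ := add_le_add (coord0_le_Nb u) (coord0_le_Nb v)
    · calc ‖lam‖ * ‖u 1 + v 1‖ ≤ ‖lam‖ * (‖u 1‖ + ‖v 1‖) :=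
            mul_le_mul_of_nonneg_left (norm_add_le _ _) (norm_nonneg _)
        _ = ‖lam‖ * ‖u 1‖ + ‖lam‖ * ‖v 1‖ := by ring
        _ ≤ _ := add_le_add (le_max_right _ _) (le_max_right _ _)

lemma opNormWrt_bdd (h1 : ‖lam‖ < 1) (hA : A = ![!![1, 0; 0, lam], !![0, lam; lam, 0]])
    {n : ℕ} (z : Fin n → Fin 2) :
    ∀ x ∈ {x : ℝ | ∃ v, Nb lam v ≤ 1 ∧
      x = Nb lam (Matrix.toEuclideanCLM (𝕜 := 𝕂) (wordProd A z) v)}, x ≤ 1 := by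
  rintro x ⟨v, hv, rfl⟩
  exact (Nb_wordProd_le h1 hA z v).trans hv

lemma Nb_single0 : Nb lam (EuclideanSpace.single (0 : Fin 2) (1:𝕂)) = 1 := by
  show max ‖EuclideanSpace.single (0 : Fin 2) (1:𝕂) 0‖
    (‖lam‖ * ‖EuclideanSpace.single (0 : Fin 2) (1:𝕂) 1‖) = 1
  rw [EuclideanSpace.single_apply, EuclideanSpace.single_apply]
  simp [norm_nonneg lam]

lemma one_le_opNormWrt_zeroWord (h1 : ‖lam‖ < 1)
    (hA : A = ![!![1, 0; 0, lam], !![0, lam; lam, 0]]) (n : ℕ) :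
    1 ≤ opNormWrt (Nb lam) (wordProd A (fun _ : Fin n => (0 : Fin 2))) := by
  apply le_csSup ⟨1, fun x hx => opNormWrt_bdd h1 hA _ x hx⟩
  refine ⟨EuclideanSpace.single (0 : Fin 2) (1:𝕂), le_of_eq Nb_single0, ?_⟩
  rw [pow_fix hA n, Nb_single0]

lemma one_le_opNormWrt_oneWord (h0 : 0 < ‖lam‖) (h1 : ‖lam‖ < 1)
    (hA : A = ![!![1, 0; 0, lam], !![0, lam; lam, 0]]) (m : ℕ) :
    1 ≤ opNormWrt (Nb lam)
      (wordProd A (Fin.cons 1 (fun _ : Fin m => (0 : Fin 2)))) := by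
  have hlam : lam ≠ 0 := by
    intro h; rw [h, norm_zero] at h0; exact lt_irrefl _ h0
  set v : EuclideanSpace 𝕂 (Fin 2) := lam⁻¹ • EuclideanSpace.single (1 : Fin 2) (1:𝕂) with hv
  have hv0 : v 0 = 0 := by
    show lam⁻¹ * EuclideanSpace.single (1 : Fin 2) (1:𝕂) 0 = 0
    simp [EuclideanSpace.single_apply]
  have hv1 : v 1 = lam⁻¹ := by
    show lam⁻¹ * EuclideanSpace.single (1 : Fin 2) (1:𝕂) 1 = lam⁻¹
    simp [EuclideanSpace.single_apply]
  have hNv : Nb lam v = 1 := by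
    show max ‖v 0‖ (‖lam‖ * ‖v 1‖) = 1
    rw [hv0, hv1, norm_inv, mul_inv_cancel₀ (ne_of_gt h0)]
    simp
  have hword : wordProd A (Fin.cons 1 (fun _ : Fin m => (0 : Fin 2))) =
      wordProd A (fun _ : Fin m => (0 : Fin 2)) * A 1 := by
    rw [wordProd_head]
    simp only [Fin.cons_succ, Fin.cons_zero]
  have hA1v : Matrix.toEuclideanCLM (𝕜 := 𝕂) (A 1) v =
      EuclideanSpace.single (0 : Fin 2) (1:𝕂) := by
    obtain ⟨e0, e1⟩ := a1_apply hA v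
    refine euclid_ext ?_ ?_
    · rw [e0, hv1, EuclideanSpace.single_apply]
      simp [hlam]
    · rw [e1, hv0, EuclideanSpace.single_apply]
      simp
  have happ : Matrix.toEuclideanCLM (𝕜 := 𝕂)
      (wordProd A (Fin.cons 1 (fun _ : Fin m => (0 : Fin 2)))) v =
      EuclideanSpace.single (0 : Fin 2) (1:𝕂) := by
    rw [hword, map_mul]
    show Matrix.toEuclideanCLM (𝕜 := 𝕂) (wordProd A (fun _ : Fin m => (0 : Fin 2)))
      (Matrix.toEuclideanCLM (𝕜 := 𝕂) (A 1) v) = _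
    rw [hA1v, pow_fix hA m]
  apply le_csSup ⟨1, fun x hx => opNormWrt_bdd h1 hA _ x hx⟩
  exact ⟨v, le_of_eq hNv, by rw [happ, Nb_single0]⟩

lemma not_rotEquiv_const_of_ne {n : ℕ} (hn : 0 < n) (ω : Fin n → Fin 2)
    (j₀ : Fin n) (hj : ω j₀ ≠ 0) :
    ¬ RotEquiv (fun _ : Fin n => (0 : Fin 2)) ω := by
  rintro ⟨k, hk⟩
  have hkn : k % n < n := Nat.mod_lt _ hn
  set j : Fin n := ⟨(j₀.val + (n - k % n)) % n, Nat.mod_lt _ hn⟩ with hjdef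
  have hidx : ((j.val + k) % n) = j₀.val := by
    have h5 : (j.val + k) % n = (j₀.val + (n - k % n) + k) % n :=
      Nat.mod_add_mod _ _ _
    have h6 : (j₀.val + (n - k % n) + k) % n = (j₀.val + (n - k % n) + k % n) % n := by
      conv_lhs => rw [Nat.add_mod (j₀.val + (n - k % n)) k n]
      conv_rhs => rw [Nat.add_mod (j₀.val + (n - k % n)) (k % n) n]
      rw [Nat.mod_mod_of_dvd k (dvd_refl n)]
    have h7 : j₀.val + (n - k % n) + k % n = j₀.val + n := by
      have := hkn
      omega
    have h8 : (j₀.val + n) % n = j₀.val := by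
      rw [Nat.add_mod_right]
      exact Nat.mod_eq_of_lt j₀.isLt
    rw [h5, h6, h7, h8]
  have h := hk j
  have : ω ⟨(j.val + k) % n, Nat.mod_lt _ j.pos⟩ = ω j₀ := by
    congr 1
    exact Fin.ext hidx
  rw [this] at h
  exact hj h.symm

lemma eventually_zero (h0 : 0 < ‖lam‖) (h1 : ‖lam‖ < 1)
    (hA : A = ![!![1, 0; 0, lam], !![0, lam; lam, 0]]) (i : ℕ → Fin 2)
    (h : ∃ c > (0:ℝ), ∀ m : ℕ, ∃ n, m ≤ n ∧ c ≤ eNorm (seqProd A i n) / jsr A ^ n) :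
    ∃ M, ∀ k, M < k → i k = 0 := by
  obtain ⟨c, hc, hcc⟩ := h
  have hjsr := jsr_eq_one h0 h1 hA
  simp only [hjsr, one_pow, div_one] at hcc
  by_contra hcon
  push_neg at hcon
  have hcon' : ∀ M : ℕ, ∃ k, M < k ∧ i k = 1 := by
    intro M
    obtain ⟨k, hk, hk0⟩ := hcon M
    have : i k = 0 ∨ i k = 1 := by omega
    exact ⟨k, hk, this.resolve_left hk0⟩
  have hcount : ∀ J : ℕ, ∃ n,
      J ≤ ((Finset.range n).filter (fun k => i (k+1) = 1)).card := by
    intro J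
    induction J with
    | zero => exact ⟨0, Nat.zero_le _⟩
    | succ J ih =>
      obtain ⟨n, hn⟩ := ih
      obtain ⟨k, hk, hk1⟩ := hcon' n
      refine ⟨k, ?_⟩
      have hsub : insert (k-1) ((Finset.range n).filter (fun k' => i (k'+1) = 1)) ⊆
          (Finset.range k).filter (fun k' => i (k'+1) = 1) := by
        intro x hx
        rcases Finset.mem_insert.mp hx with rfl | hx
        · rw [Finset.mem_filter, Finset.mem_range]
          refine ⟨by omega, ?_⟩
          rw [show k - 1 + 1 = k by omega]
          exact hk1
        · rw [Finset.mem_filter, Finset.mem_range] at hx ⊢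
          exact ⟨by omega, hx.2⟩
      have hnotmem : (k-1) ∉ (Finset.range n).filter (fun k' => i (k'+1) = 1) := by
        rw [Finset.mem_filter, Finset.mem_range]
        rintro ⟨h', -⟩
        omega
      have hcard := Finset.card_le_card hsub
      rw [Finset.card_insert_of_notMem hnotmem] at hcard
      omega
  obtain ⟨J, hJ⟩ := exists_pow_lt_of_lt_one hc h1
  obtain ⟨n, hn⟩ := hcount J
  obtain ⟨n', hn', hcn'⟩ := hcc n
  have hmono : ((Finset.range n).filter (fun k => i (k+1) = 1)).card ≤
      ((Finset.range n').filter (fun k => i (k+1) = 1)).card :=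
    Finset.card_le_card (Finset.filter_subset_filter _ (Finset.range_subset_range.2 hn'))
  have hbound := eNorm_seqProd_le h1 hA i n'
  have hfin : eNorm (seqProd A i n') ≤ ‖lam‖ ^ J :=
    hbound.trans (pow_le_pow_of_le_one (norm_nonneg _) h1.le (by omega))
  linarith

lemma det_limit_zero (h0 : 0 < ‖lam‖) (h1 : ‖lam‖ < 1)
    (hA : A = ![!![1, 0; 0, lam], !![0, lam; lam, 0]]) (B : Matrix (Fin 2) (Fin 2) 𝕂)
    (hB : B ∈ limitSemigroup A) : B.det = 0 := by
  have hjsr := jsr_eq_one h0 h1 hA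
  have hch : ∀ k : ℕ, ∃ P : Matrix (Fin 2) (Fin 2) 𝕂,
      ‖P.det‖ ≤ ‖lam‖ ^ k ∧ eNorm (P - B) < 1/(k+1) := by
    intro k
    obtain ⟨n, hnk, i, hi⟩ := hB k (1/(k+1)) (by positivity)
    refine ⟨wordProd A i, ?_, ?_⟩
    · exact (norm_det_wordProd_le h1 hA i).trans
        (pow_le_pow_of_le_one (norm_nonneg _) h1.le hnk)
    · rw [hjsr, one_pow, inv_one, one_smul] at hi
      exact hi
  choose P hdet hclose using hch
  have hPij : ∀ a b : Fin 2, Tendsto (fun k => P k a b) atTop (𝓝 (B a b)) := by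
    intro a b
    rw [← tendsto_sub_nhds_zero_iff]
    have hb : ∀ k : ℕ, ‖P k a b - B a b‖ ≤ 1/((k:ℝ)+1) := by
      intro k
      calc ‖P k a b - B a b‖ = ‖(P k - B) a b‖ := by rw [Matrix.sub_apply]
        _ ≤ eNorm (P k - B) := entry_le_eNorm _ a b
        _ ≤ 1/((k:ℝ)+1) := (hclose k).le
    exact squeeze_zero_norm hb tendsto_one_div_add_atTop_nhds_zero_nat
  have hdet_t : Tendsto (fun k => (P k).det) atTop (𝓝 (B.det)) := by
    have e : ∀ M : Matrix (Fin 2) (Fin 2) 𝕂, M.det = M 0 0 * M 1 1 - M 0 1 * M 1 0 :=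
      fun M => Matrix.det_fin_two M
    simp_rw [e]
    exact ((hPij 0 0).mul (hPij 1 1)).sub ((hPij 0 1).mul (hPij 1 0))
  have hdet_0 : Tendsto (fun k => (P k).det) atTop (𝓝 0) := by
    apply squeeze_zero_norm hdet
    exact tendsto_pow_atTop_nhds_zero_of_lt_one (norm_nonneg _) h1
  exact tendsto_nhds_unique hdet_t hdet_0

lemma irreducible_helper (h0 : 0 < ‖lam‖) (h1 : ‖lam‖ < 1)
    (hA : A = ![!![1, 0; 0, lam], !![0, lam; lam, 0]]) : IsIrreducible A := by
  intro V hV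
  by_cases hbot : V = ⊥
  · exact Or.inl hbot
  refine Or.inr ?_
  obtain ⟨v, hvV, hv0⟩ := Submodule.exists_mem_ne_zero_of_ne_bot hbot
  have hlam : lam ≠ 0 := by
    intro h; rw [h, norm_zero] at h0; exact lt_irrefl _ h0
  set E0 : EuclideanSpace 𝕂 (Fin 2) := EuclideanSpace.single (0:Fin 2) (1:𝕂) with hE0def
  set E1 : EuclideanSpace 𝕂 (Fin 2) := EuclideanSpace.single (1:Fin 2) (1:𝕂) with hE1def
  have hE00 : E0 0 = 1 := by rw [hE0def]; simp [EuclideanSpace.single_apply]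
  have hE01 : E0 1 = 0 := by rw [hE0def]; simp [EuclideanSpace.single_apply]
  have hE10 : E1 0 = 0 := by rw [hE1def]; simp [EuclideanSpace.single_apply]
  have hE11 : E1 1 = 1 := by rw [hE1def]; simp [EuclideanSpace.single_apply]
  have hsmul : ∀ (c : 𝕂) (u : EuclideanSpace 𝕂 (Fin 2)) (j : Fin 2), (c • u) j = c * u j :=
    fun _ _ _ => rfl
  have hsub : ∀ (a b : EuclideanSpace 𝕂 (Fin 2)) (j : Fin 2), (a - b) j = a j - b j :=
    fun _ _ _ => rfl
  have hadd : ∀ (a b : EuclideanSpace 𝕂 (Fin 2)) (j : Fin 2), (a + b) j = a j + b j :=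
    fun _ _ _ => rfl
  have step01 : E0 ∈ V → E1 ∈ V := by
    intro h
    have hw : Matrix.toEuclideanCLM (𝕜 := 𝕂) (A 1) E0 ∈ V := hV 1 E0 h
    obtain ⟨e0, e1⟩ := a1_apply hA E0
    have heq : E1 = lam⁻¹ • Matrix.toEuclideanCLM (𝕜 := 𝕂) (A 1) E0 := by
      refine euclid_ext ?_ ?_
      · rw [hsmul, e0, hE01, hE10]; ring
      · rw [hsmul, e1, hE00, hE11]; field_simp
    rw [heq]
    exact Submodule.smul_mem V _ hw
  have step10 : E1 ∈ V → E0 ∈ V := by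
    intro h
    have hw : Matrix.toEuclideanCLM (𝕜 := 𝕂) (A 1) E1 ∈ V := hV 1 E1 h
    obtain ⟨e0, e1⟩ := a1_apply hA E1
    have heq : E0 = lam⁻¹ • Matrix.toEuclideanCLM (𝕜 := 𝕂) (A 1) E1 := by
      refine euclid_ext ?_ ?_
      · rw [hsmul, e0, hE11, hE00]; field_simp
      · rw [hsmul, e1, hE10, hE01]; ring
    rw [heq]
    exact Submodule.smul_mem V _ hw
  have key : E0 ∈ V ∨ E1 ∈ V := by
    by_cases hy : v 1 = 0
    · left
      have hx : v 0 ≠ 0 := by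
        intro hx
        exact hv0 (euclid_ext (by rw [hx]; rfl) (by rw [hy]; rfl))
      have heq : E0 = (v 0)⁻¹ • v := by
        refine euclid_ext ?_ ?_
        · rw [hsmul, hE00, inv_mul_cancel₀ hx]
        · rw [hsmul, hE01, hy, mul_zero]
      rw [heq]
      exact Submodule.smul_mem V _ hvV
    · right
      have hu : v - Matrix.toEuclideanCLM (𝕜 := 𝕂) (A 0) v ∈ V :=
        Submodule.sub_mem V hvV (hV 0 v hvV)
      obtain ⟨e0, e1⟩ := a0_apply hA v
      have hone : (1 : 𝕂) - lam ≠ 0 := by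
        intro h
        have : lam = 1 := by linear_combination -h
        rw [this] at h1
        simp at h1
      have hc : (1 - lam) * v 1 ≠ 0 := mul_ne_zero hone hy
      have heq : E1 = ((1 - lam) * v 1)⁻¹ • (v - Matrix.toEuclideanCLM (𝕜 := 𝕂) (A 0) v) := by
        refine euclid_ext ?_ ?_
        · rw [hsmul, hsub, e0, hE10]; ring
        · rw [hsmul, hsub, e1, hE11]
          field_simp
      rw [heq]
      exact Submodule.smul_mem V _ hu
  have both : E0 ∈ V ∧ E1 ∈ V := by
    rcases key with h | h
    · exact ⟨h, step01 h⟩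
    · exact ⟨step10 h, h⟩
  rw [Submodule.eq_top_iff']
  intro w
  have hw : w = w 0 • E0 + w 1 • E1 := by
    refine euclid_ext ?_ ?_
    · rw [hadd, hsmul, hsmul, hE00, hE10]; ring
    · rw [hadd, hsmul, hsmul, hE01, hE11]; ring
  rw [hw]
  exact Submodule.add_mem V (Submodule.smul_mem V _ both.1) (Submodule.smul_mem V _ both.2)

end
end Helpers
end JSRPaper

open JSRPaper.Helpers in
open JSRPaper in
/-- **Example 2.** For `A₁ = [[1,0],[0,λ]]`, `A₂ = [[0,λ],[λ,0]]` with `0 < |λ| < 1`,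
the pair `𝒜 = (A₁, A₂)` is irreducible with `ϱ(𝒜) = 1`, has the finiteness, unbounded
agreements and rank one properties, `‖(x,y)‖ = max {|x|, |λy|}` is a Barabanov norm,
but `𝒜` does not satisfy the strong finiteness hypothesis with any characteristic word. -/
theorem stmt_14 {𝕂 : Type*} [RCLike 𝕂] (lam : 𝕂) (h0 : 0 < ‖lam‖) (h1 : ‖lam‖ < 1)
    (A : Fin 2 → Matrix (Fin 2) (Fin 2) 𝕂)
    (hA : A = ![!![1, 0; 0, lam], !![0, lam; lam, 0]]) :
    IsIrreducible A ∧
    jsr A = 1 ∧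
    FinitenessProp A ∧
    UnboundedAgreements A ∧
    RankOneProp A ∧
    IsBarabanov A (fun v : EuclideanSpace 𝕂 (Fin 2) => max ‖v 0‖ (‖lam‖ * ‖v 1‖)) ∧
    (∀ n : ℕ, 0 < n → ∀ ω : Fin n → Fin 2, ¬ StrongFinHyp A ω) := by
  have hjsr : jsr A = 1 := jsr_eq_one h0 h1 hA
  have hNb : IsBarabanov A (Nb lam) := by
    refine ⟨IsNorm_Nb h0, fun v => ?_⟩
    rw [hjsr, one_mul]
    exact (Nb_sup_eq h1 hA v).symm
  refine ⟨irreducible_helper h0 h1 hA, hjsr, ?_, ?_, ?_, hNb, ?_⟩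
  · -- FinitenessProp
    refine ⟨1, one_pos, fun _ => 0, ?_⟩
    have hw : wordProd A (fun _ : Fin 1 => (0 : Fin 2)) = A 0 := by
      rw [wordProd_const, pow_one]
    rw [hw, specRad_A0 h1 hA, hjsr]
    exact Real.one_rpow _
  · -- UnboundedAgreements
    intro N i1 i2 hI1 hI2
    obtain ⟨M1, hM1⟩ := eventually_zero h0 h1 hA i1 hI1
    obtain ⟨M2, hM2⟩ := eventually_zero h0 h1 hA i2 hI2
    exact ⟨M1, M2, fun k hk1 _ => by
      rw [hM1 _ (by omega), hM2 _ (by omega)]⟩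
  · -- RankOneProp
    constructor
    · refine ⟨by rw [hjsr]; exact one_pos, 1 + ‖lam‖⁻¹, fun n i => ?_⟩
      rw [hjsr, one_pow, mul_one]
      exact eNorm_wordProd_le h0 h1 hA i
    · intro B hB hBne
      exact rank_one_of_det_eq_zero hBne (det_limit_zero h0 h1 hA B hB)
  · -- no characteristic word
    intro n hn ω hSF
    by_cases hw : ∀ j, ω j = 0
    · obtain ⟨m, rfl⟩ : ∃ m, n = m + 1 := ⟨n - 1, by omega⟩
      set z : Fin (m+1) → Fin 2 := Fin.cons 1 (fun _ : Fin m => 0) with hzdef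
      have hz : ¬ RotEquiv z ω := by
        rintro ⟨k, hk⟩
        have h := hk 0
        rw [hw] at h
        rw [show z 0 = 1 from by rw [hzdef]; exact Fin.cons_zero _ _] at h
        exact absurd h (by decide)
      have hlt := hSF (Nb lam) hNb z hz
      rw [hjsr, one_pow] at hlt
      exact absurd hlt (not_lt.2 (one_le_opNormWrt_oneWord h0 h1 hA m))
    · push_neg at hw
      obtain ⟨j₀, hj₀⟩ := hw
      have hz := not_rotEquiv_const_of_ne hn ω j₀ hj₀
      have hlt := hSF (Nb lam) hNb _ hz
      rw [hjsr, one_pow] at hlt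
      exact absurd hlt (not_lt.2 (one_le_opNormWrt_zeroWord h1 hA n))
end
end

section
/- Let 𝕂 be ℝ or ℂ, let λ ∈ 𝕂 with 0 < |λ| < 1, and let A_1 = [[1,0],[0,−1]], A_2 = [[0,λ],[λ,0]]. Then the pair 𝒜 = (A_1, A_2) is irreducible with ϱ(𝒜) = 1 and has the unbounded agreements property and the finiteness property; the identity matrix belongs to the limit semigroup 𝒮(𝒜), so 𝒜 does not have the rank one property; and for every p ≥ 1 the norm ‖(x,y)ᵀ‖_p = (|x|^p + |y|^p)^{1/p} is a Barabanov norm for 𝒜, so 𝒜 has Barabanov norms that are not proportional to each other. -/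
open Filter Topology

noncomputable section

namespace JSRPaper

section Aux
variable {𝕂 : Type*} [RCLike 𝕂]

lemma clm_apply (M : Matrix (Fin 2) (Fin 2) 𝕂) (v : EuclideanSpace 𝕂 (Fin 2)) (j : Fin 2) :
    (Matrix.toEuclideanCLM (𝕜 := 𝕂) M v) j = M.mulVec v j := rfl

lemma apply_A0 (v : EuclideanSpace 𝕂 (Fin 2)) :
    (Matrix.toEuclideanCLM (𝕜 := 𝕂) !![1, 0; 0, -1] v) = ![v 0, -v 1] := by
  funext j
  rw [clm_apply]
  fin_cases j <;>
    simp [Matrix.mulVec, dotProduct, Fin.sum_univ_two, Matrix.vecHead, Matrix.vecTail]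

lemma apply_A1 (lam : 𝕂) (v : EuclideanSpace 𝕂 (Fin 2)) :
    (Matrix.toEuclideanCLM (𝕜 := 𝕂) !![0, lam; lam, 0] v) = ![lam * v 1, lam * v 0] := by
  funext j
  rw [clm_apply]
  fin_cases j <;>
    simp [Matrix.mulVec, dotProduct, Fin.sum_univ_two, Matrix.vecHead, Matrix.vecTail]

lemma norm_A0_apply (v : EuclideanSpace 𝕂 (Fin 2)) :
    ‖Matrix.toEuclideanCLM (𝕜 := 𝕂) !![1, 0; 0, -1] v‖ = ‖v‖ := by
  rw [EuclideanSpace.norm_eq, EuclideanSpace.norm_eq]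
  congr 1
  rw [Fin.sum_univ_two, Fin.sum_univ_two, apply_A0]
  simp

lemma norm_A1_apply (lam : 𝕂) (v : EuclideanSpace 𝕂 (Fin 2)) :
    ‖Matrix.toEuclideanCLM (𝕜 := 𝕂) !![0, lam; lam, 0] v‖ = ‖lam‖ * ‖v‖ := by
  rw [EuclideanSpace.norm_eq, EuclideanSpace.norm_eq]
  rw [Fin.sum_univ_two, Fin.sum_univ_two, apply_A1]
  simp only [Matrix.cons_val_zero, Matrix.cons_val_one, Matrix.head_cons, norm_mul, mul_pow]
  rw [← mul_add, Real.sqrt_mul (by positivity), Real.sqrt_sq (norm_nonneg _), add_comm (‖v 1‖^2)]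

lemma eNorm_nonneg (M : Matrix (Fin 2) (Fin 2) 𝕂) : 0 ≤ eNorm M := norm_nonneg _

lemma eNorm_mul_le (M N : Matrix (Fin 2) (Fin 2) 𝕂) : eNorm (M * N) ≤ eNorm M * eNorm N := by
  unfold eNorm
  rw [map_mul]
  exact ContinuousLinearMap.opNorm_comp_le _ _

lemma eNorm_one : eNorm (1 : Matrix (Fin 2) (Fin 2) 𝕂) = 1 := by
  unfold eNorm
  rw [map_one]
  exact norm_one

lemma opNorm_of_scale (T : EuclideanSpace 𝕂 (Fin 2) →L[𝕂] EuclideanSpace 𝕂 (Fin 2)) (c : ℝ)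
    (hc : 0 ≤ c) (h : ∀ v, ‖T v‖ = c * ‖v‖) : ‖T‖ = c := by
  apply le_antisymm
  · exact T.opNorm_le_bound hc (fun v => (h v).le)
  · have h2 := T.le_opNorm (EuclideanSpace.single (0 : Fin 2) (1 : 𝕂))
    rw [h, EuclideanSpace.norm_single] at h2
    simpa using h2

lemma eNorm_A0 : eNorm (!![1, 0; 0, -1] : Matrix (Fin 2) (Fin 2) 𝕂) = 1 :=
  opNorm_of_scale _ 1 zero_le_one (fun v => by rw [norm_A0_apply, one_mul])

lemma eNorm_A1 (lam : 𝕂) : eNorm (!![0, lam; lam, 0] : Matrix (Fin 2) (Fin 2) 𝕂) = ‖lam‖ :=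
  opNorm_of_scale _ _ (norm_nonneg _) (norm_A1_apply lam)

lemma A0_sq : (!![1, 0; 0, -1] : Matrix (Fin 2) (Fin 2) 𝕂) * !![1, 0; 0, -1] = 1 := by
  norm_num [Matrix.mul_fin_two]
  exact (Matrix.one_fin_two).symm

lemma A0_pow_cases (n : ℕ) :
    (!![1, 0; 0, -1] : Matrix (Fin 2) (Fin 2) 𝕂) ^ n = 1 ∨
      (!![1, 0; 0, -1] : Matrix (Fin 2) (Fin 2) 𝕂) ^ n = !![1, 0; 0, -1] := by
  induction n with
  | zero => left; rw [pow_zero]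
  | succ n ih =>
    rcases ih with h | h
    · right; rw [pow_succ, h, one_mul]
    · left; rw [pow_succ, h, A0_sq]

lemma eNorm_A0_pow (n : ℕ) :
    eNorm ((!![1, 0; 0, -1] : Matrix (Fin 2) (Fin 2) 𝕂) ^ n) = 1 := by
  rcases A0_pow_cases (𝕂 := 𝕂) n with h | h <;> rw [h]
  · exact eNorm_one
  · exact eNorm_A0

lemma A0_even_pow (m : ℕ) :
    (!![1, 0; 0, -1] : Matrix (Fin 2) (Fin 2) 𝕂) ^ (2 * m) = 1 := by
  rw [pow_mul, pow_two, A0_sq, one_pow]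

lemma wordProd_zeroLen {r : ℕ} (A : Fin r → Matrix (Fin 2) (Fin 2) 𝕂) (i : Fin 0 → Fin r) :
    wordProd A i = 1 := by
  simp [wordProd]

lemma wordProd_succ {r n : ℕ} (A : Fin r → Matrix (Fin 2) (Fin 2) 𝕂) (i : Fin (n + 1) → Fin r) :
    wordProd A i = A (i (Fin.last n)) * wordProd A (fun k => i k.castSucc) := by
  unfold wordProd
  rw [List.ofFn_succ']
  rw [List.concat_eq_append, List.reverse_append]
  simp

lemma wordProd_const_zero {r : ℕ} (A : Fin (r + 1) → Matrix (Fin 2) (Fin 2) 𝕂) (n : ℕ) :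
    wordProd A (fun _ : Fin n => (0 : Fin (r + 1))) = A 0 ^ n := by
  induction n with
  | zero => rw [wordProd_zeroLen, pow_zero]
  | succ n ih => rw [wordProd_succ, ih, pow_succ']

lemma eNorm_wordProd_le_one {r n : ℕ} (A : Fin r → Matrix (Fin 2) (Fin 2) 𝕂)
    (hle : ∀ j, eNorm (A j) ≤ 1) (i : Fin n → Fin r) : eNorm (wordProd A i) ≤ 1 := by
  induction n with
  | zero => rw [wordProd_zeroLen, eNorm_one]
  | succ n ih =>
    rw [wordProd_succ]
    calc eNorm (A (i (Fin.last n)) * wordProd A fun k => i k.castSucc)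
        ≤ eNorm (A (i (Fin.last n))) * eNorm (wordProd A fun k => i k.castSucc) :=
          eNorm_mul_le _ _
      _ ≤ 1 := mul_le_one₀ (hle _) (eNorm_nonneg _) (ih _)

lemma jsr_eq_one' {r : ℕ} (A : Fin (r + 1) → Matrix (Fin 2) (Fin 2) 𝕂)
    (hle : ∀ j, eNorm (A j) ≤ 1) (hpow : ∀ n : ℕ, eNorm (A 0 ^ n) = 1) : jsr A = 1 := by
  unfold jsr
  have hsup : ∀ n : ℕ+, (⨆ i : Fin (n : ℕ) → Fin (r + 1), eNorm (wordProd A i)) = 1 := by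
    intro n
    apply le_antisymm
    · exact ciSup_le fun i => eNorm_wordProd_le_one A hle i
    · have := le_ciSup (f := fun i : Fin (n : ℕ) → Fin (r + 1) => eNorm (wordProd A i))
        (Set.Finite.bddAbove (Set.finite_range _)) (fun _ => 0)
      rwa [wordProd_const_zero, hpow] at this
  calc (⨅ n : ℕ+, (⨆ i : Fin (n : ℕ) → Fin (r + 1), eNorm (wordProd A i)) ^ ((n : ℝ)⁻¹))
      = ⨅ _ : ℕ+, (1 : ℝ) := by
        congr 1
        funext n
        rw [hsup n, Real.one_rpow]
    _ = 1 := ciInf_const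

lemma specRad_A0 : specRad (!![1, 0; 0, -1] : Matrix (Fin 2) (Fin 2) 𝕂) = 1 := by
  unfold specRad
  calc (⨅ k : ℕ+, eNorm ((!![1, 0; 0, -1] : Matrix (Fin 2) (Fin 2) 𝕂) ^ (k : ℕ)) ^ (((k : ℕ) : ℝ)⁻¹))
      = ⨅ _ : ℕ+, (1 : ℝ) := by
        congr 1
        funext k
        rw [eNorm_A0_pow, Real.one_rpow]
    _ = 1 := ciInf_const

end Aux

end JSRPaper


namespace JSRPaper

section Aux2
variable {𝕂 : Type*} [RCLike 𝕂]

lemma seqProd_zero {r : ℕ} (A : Fin r → Matrix (Fin 2) (Fin 2) 𝕂) (i : ℕ → Fin r) :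
    seqProd A i 0 = 1 := wordProd_zeroLen A _

lemma seqProd_succ {r : ℕ} (A : Fin r → Matrix (Fin 2) (Fin 2) 𝕂) (i : ℕ → Fin r) (n : ℕ) :
    seqProd A i (n + 1) = A (i (n + 1)) * seqProd A i n := by
  unfold seqProd
  rw [wordProd_succ]
  rfl

lemma eNorm_seqProd_mono {r : ℕ} (A : Fin r → Matrix (Fin 2) (Fin 2) 𝕂)
    (hle : ∀ j, eNorm (A j) ≤ 1) (i : ℕ → Fin r) {n m : ℕ} (h : n ≤ m) :
    eNorm (seqProd A i m) ≤ eNorm (seqProd A i n) := by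
  induction m, h using Nat.le_induction with
  | base => exact le_refl _
  | succ m hm ih =>
    rw [seqProd_succ]
    calc eNorm (A (i (m + 1)) * seqProd A i m)
        ≤ eNorm (A (i (m + 1))) * eNorm (seqProd A i m) := eNorm_mul_le _ _
      _ ≤ 1 * eNorm (seqProd A i n) :=
          mul_le_mul (hle _) ih (eNorm_nonneg _) zero_le_one
      _ = eNorm (seqProd A i n) := one_mul _

lemma eventually_zero (lam : 𝕂) (h1 : ‖lam‖ < 1)
    (A : Fin 2 → Matrix (Fin 2) (Fin 2) 𝕂)
    (hA : A = ![!![1, 0; 0, -1], !![0, lam; lam, 0]]) (i : ℕ → Fin 2)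
    (hc : ∃ c > (0 : ℝ), ∀ m : ℕ, ∃ n, m ≤ n ∧ c ≤ eNorm (seqProd A i n)) :
    ∃ M : ℕ, ∀ k, M < k → i k = 0 := by
  have hle : ∀ j, eNorm (A j) ≤ 1 := by
    intro j
    fin_cases j <;> simp [hA, eNorm_A0, eNorm_A1, h1.le]
  by_contra hcon
  push_neg at hcon
  obtain ⟨c, hc0, hcb⟩ := hc
  have key : ∀ t : ℕ, ∃ n, eNorm (seqProd A i n) ≤ ‖lam‖ ^ t := by
    intro t
    induction t with
    | zero => exact ⟨0, by rw [seqProd_zero, eNorm_one, pow_zero]⟩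
    | succ t ih =>
      obtain ⟨n, hn⟩ := ih
      obtain ⟨k, hk, hik⟩ := hcon n
      have hik1 : i k = 1 := by
        have h2 := (i k).isLt
        have h3 : (i k).val ≠ 0 := fun h => hik (Fin.ext h)
        exact Fin.ext (show (i k).val = 1 by omega)
      obtain ⟨k', rfl⟩ : ∃ k', k = k' + 1 := ⟨k - 1, by omega⟩
      refine ⟨k' + 1, ?_⟩
      rw [seqProd_succ, hik1]
      calc eNorm (A 1 * seqProd A i k')
          ≤ eNorm (A 1) * eNorm (seqProd A i k') := eNorm_mul_le _ _
        _ ≤ ‖lam‖ * ‖lam‖ ^ t := by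
            apply mul_le_mul
            · rw [hA]; simp [eNorm_A1]
            · exact le_trans (eNorm_seqProd_mono A hle i (by omega)) hn
            · exact eNorm_nonneg _
            · exact norm_nonneg _
        _ = ‖lam‖ ^ (t + 1) := (pow_succ' _ _).symm
  obtain ⟨t, ht⟩ := exists_pow_lt_of_lt_one hc0 h1
  obtain ⟨n, hn⟩ := key t
  obtain ⟨n', hn', hcn⟩ := hcb n
  have := le_trans (eNorm_seqProd_mono A hle i hn') hn
  linarith

end Aux2

end JSRPaper


namespace JSRPaper

section Aux3
variable {𝕂 : Type*} [RCLike 𝕂]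

/-- The `ℓ^p` norm on `𝕂²`. -/
def lpN (p : ℝ) : EuclideanSpace 𝕂 (Fin 2) → ℝ :=
  fun v => (‖v 0‖ ^ p + ‖v 1‖ ^ p) ^ p⁻¹

lemma lpN_nonneg (p : ℝ) (v : EuclideanSpace 𝕂 (Fin 2)) : 0 ≤ lpN p v :=
  Real.rpow_nonneg (by positivity) _

lemma rpow_factor {c a b p : ℝ} (hc : 0 ≤ c) (ha : 0 ≤ a) (hb : 0 ≤ b) (hp : 0 < p) :
    ((c * a) ^ p + (c * b) ^ p) ^ p⁻¹ = c * (a ^ p + b ^ p) ^ p⁻¹ := by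
  rw [Real.mul_rpow hc ha, Real.mul_rpow hc hb, ← mul_add,
    Real.mul_rpow (by positivity) (by positivity), ← Real.rpow_mul hc,
    mul_inv_cancel₀ hp.ne', Real.rpow_one]

lemma isNorm_lpN (p : ℝ) (hp : 1 ≤ p) : IsNorm (lpN (𝕂 := 𝕂) p) := by
  have hp0 : 0 < p := lt_of_lt_of_le one_pos hp
  refine ⟨fun v => ?_, fun c v => ?_, fun u v => ?_⟩
  · unfold lpN
    rw [Real.rpow_eq_zero (by positivity) (inv_ne_zero hp0.ne')]
    constructor
    · intro h
      obtain ⟨h0, h1⟩ := (add_eq_zero_iff_of_nonneg (by positivity) (by positivity)).mp h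
      have hv0 : v 0 = 0 := norm_eq_zero.mp ((Real.rpow_eq_zero (norm_nonneg _) hp0.ne').mp h0)
      have hv1 : v 1 = 0 := norm_eq_zero.mp ((Real.rpow_eq_zero (norm_nonneg _) hp0.ne').mp h1)
      ext j
      fin_cases j
      · exact hv0
      · exact hv1
    · rintro rfl
      simp [Real.zero_rpow hp0.ne']
  · have h0 : (c • v) 0 = c * v 0 := rfl
    have h1 : (c • v) 1 = c * v 1 := rfl
    unfold lpN
    rw [h0, h1, norm_mul, norm_mul, rpow_factor (norm_nonneg c) (norm_nonneg _) (norm_nonneg _) hp0]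
  · have H := Real.Lp_add_le (Finset.univ : Finset (Fin 2))
      (fun j => ‖u j‖) (fun j => ‖v j‖) hp
    simp only [Fin.sum_univ_two, one_div] at H
    rw [abs_of_nonneg (by positivity), abs_of_nonneg (by positivity),
      abs_of_nonneg (norm_nonneg _), abs_of_nonneg (norm_nonneg _),
      abs_of_nonneg (norm_nonneg _), abs_of_nonneg (norm_nonneg _)] at H
    refine le_trans ?_ H
    unfold lpN
    apply Real.rpow_le_rpow (by positivity) ?_ (by positivity)
    have e0 : (u + v) 0 = u 0 + v 0 := rfl
    have e1 : (u + v) 1 = u 1 + v 1 := rfl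
    rw [e0, e1]
    exact add_le_add (Real.rpow_le_rpow (norm_nonneg _) (norm_add_le _ _) hp0.le)
      (Real.rpow_le_rpow (norm_nonneg _) (norm_add_le _ _) hp0.le)

lemma lpN_A0 (p : ℝ) (v : EuclideanSpace 𝕂 (Fin 2)) :
    lpN p (Matrix.toEuclideanCLM (𝕜 := 𝕂) !![1, 0; 0, -1] v) = lpN p v := by
  unfold lpN
  rw [apply_A0]
  simp

lemma lpN_A1 (p : ℝ) (hp : 0 < p) (lam : 𝕂) (v : EuclideanSpace 𝕂 (Fin 2)) :
    lpN p (Matrix.toEuclideanCLM (𝕜 := 𝕂) !![0, lam; lam, 0] v) = ‖lam‖ * lpN p v := by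
  unfold lpN
  rw [apply_A1]
  simp only [Matrix.cons_val_zero, Matrix.cons_val_one, Matrix.head_cons, norm_mul]
  rw [rpow_factor (norm_nonneg lam) (norm_nonneg _) (norm_nonneg _) hp, add_comm (‖v 1‖ ^ p)]

lemma isBarabanov_lpN (lam : 𝕂) (h1 : ‖lam‖ ≤ 1)
    (A : Fin 2 → Matrix (Fin 2) (Fin 2) 𝕂)
    (hA : A = ![!![1, 0; 0, -1], !![0, lam; lam, 0]]) (hjsr : jsr A = 1)
    (p : ℝ) (hp : 1 ≤ p) : IsBarabanov A (lpN p) := by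
  have hp0 : 0 < p := lt_of_lt_of_le one_pos hp
  refine ⟨isNorm_lpN p hp, fun v => ?_⟩
  rw [hjsr, one_mul]
  have f0 : lpN p (Matrix.toEuclideanCLM (𝕜 := 𝕂) (A 0) v) = lpN p v := by
    rw [hA]
    simpa using lpN_A0 p v
  have f1 : lpN p (Matrix.toEuclideanCLM (𝕜 := 𝕂) (A 1) v) = ‖lam‖ * lpN p v := by
    rw [hA]
    simpa using lpN_A1 p hp0 lam v
  apply le_antisymm
  · have := le_ciSup (f := fun i : Fin 2 => lpN p (Matrix.toEuclideanCLM (𝕜 := 𝕂) (A i) v))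
      (Set.Finite.bddAbove (Set.finite_range _)) 0
    rwa [f0] at this
  · apply ciSup_le
    intro i
    fin_cases i
    · exact le_of_eq f0
    · rw [show ((⟨1, by omega⟩ : Fin 2) : Fin 2) = 1 from rfl, f1]
      exact mul_le_of_le_one_left (lpN_nonneg p v) h1

end Aux3

end JSRPaper


namespace JSRPaper

section Aux4
variable {𝕂 : Type*} [RCLike 𝕂]

/-- The first standard basis vector of `𝕂²`. -/
def ee0 : EuclideanSpace 𝕂 (Fin 2) := WithLp.toLp 2 ![1, 0]

/-- The second standard basis vector of `𝕂²`. -/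
def ee1 : EuclideanSpace 𝕂 (Fin 2) := WithLp.toLp 2 ![0, 1]

lemma irreducible_example (lam : 𝕂) (hlam : lam ≠ 0)
    (A : Fin 2 → Matrix (Fin 2) (Fin 2) 𝕂)
    (hA : A = ![!![1, 0; 0, -1], !![0, lam; lam, 0]]) : IsIrreducible A := by
  have hA0 : A 0 = !![1, 0; 0, -1] := by rw [hA]; rfl
  have hA1 : A 1 = !![0, lam; lam, 0] := by rw [hA]; rfl
  intro V hV
  by_cases hbot : V = ⊥
  · exact Or.inl hbot
  right
  obtain ⟨v, hvV, hv0⟩ := Submodule.exists_mem_ne_zero_of_ne_bot hbot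
  have hA0v : Matrix.toEuclideanCLM (𝕜 := 𝕂) (A 0) v ∈ V := hV 0 v hvV
  have key : ee0 (𝕂 := 𝕂) ∈ V ∨ ee1 (𝕂 := 𝕂) ∈ V := by
    have hcoord : v 0 ≠ 0 ∨ v 1 ≠ 0 := by
      by_contra h
      push_neg at h
      apply hv0
      ext j
      fin_cases j
      · exact h.1
      · exact h.2
    rcases hcoord with h | h
    · left
      have hsum : v + Matrix.toEuclideanCLM (𝕜 := 𝕂) (A 0) v ∈ V := V.add_mem hvV hA0v
      have heq : v + Matrix.toEuclideanCLM (𝕜 := 𝕂) (A 0) v = (v 0 + v 0) • ee0 := by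
        rw [hA0]
        ext j
        fin_cases j <;> simp [ee0, apply_A0, Matrix.vecHead, Matrix.vecTail]
      have hne : v 0 + v 0 ≠ 0 := by
        intro hz
        apply h
        have : (2 : 𝕂) * v 0 = 0 := by rw [two_mul]; exact hz
        rcases mul_eq_zero.mp this with h2 | h2
        · exact absurd h2 two_ne_zero
        · exact h2
      have hmem : (v 0 + v 0) • ee0 (𝕂 := 𝕂) ∈ V := heq ▸ hsum
      have := V.smul_mem (v 0 + v 0)⁻¹ hmem
      rwa [smul_smul, inv_mul_cancel₀ hne, one_smul] at this
    · right
      have hsum : v - Matrix.toEuclideanCLM (𝕜 := 𝕂) (A 0) v ∈ V := V.sub_mem hvV hA0v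
      have heq : v - Matrix.toEuclideanCLM (𝕜 := 𝕂) (A 0) v = (v 1 + v 1) • ee1 := by
        rw [hA0]
        ext j
        fin_cases j <;> simp [ee1, sub_neg_eq_add, apply_A0, Matrix.vecHead, Matrix.vecTail]
      have hne : v 1 + v 1 ≠ 0 := by
        intro hz
        apply h
        have : (2 : 𝕂) * v 1 = 0 := by rw [two_mul]; exact hz
        rcases mul_eq_zero.mp this with h2 | h2
        · exact absurd h2 two_ne_zero
        · exact h2
      have hmem : (v 1 + v 1) • ee1 (𝕂 := 𝕂) ∈ V := heq ▸ hsum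
      have := V.smul_mem (v 1 + v 1)⁻¹ hmem
      rwa [smul_smul, inv_mul_cancel₀ hne, one_smul] at this
  have step01 : Matrix.toEuclideanCLM (𝕜 := 𝕂) (A 1) ee0 = lam • ee1 := by
    rw [hA1]
    ext j
    fin_cases j <;> simp [ee0, ee1, apply_A1]
  have step10 : Matrix.toEuclideanCLM (𝕜 := 𝕂) (A 1) ee1 = lam • ee0 := by
    rw [hA1]
    ext j
    fin_cases j <;> simp [ee0, ee1, apply_A1]
  have both : ee0 (𝕂 := 𝕂) ∈ V ∧ ee1 (𝕂 := 𝕂) ∈ V := by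
    rcases key with h | h
    · refine ⟨h, ?_⟩
      have hm := hV 1 _ h
      rw [step01] at hm
      have := V.smul_mem lam⁻¹ hm
      rwa [smul_smul, inv_mul_cancel₀ hlam, one_smul] at this
    · refine ⟨?_, h⟩
      have hm := hV 1 _ h
      rw [step10] at hm
      have := V.smul_mem lam⁻¹ hm
      rwa [smul_smul, inv_mul_cancel₀ hlam, one_smul] at this
  rw [eq_top_iff]
  intro w _
  have hw : w = w 0 • ee0 + w 1 • ee1 := by
    ext j
    fin_cases j <;> simp [ee0, ee1]
  rw [hw]
  exact V.add_mem (V.smul_mem _ both.1) (V.smul_mem _ both.2)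

end Aux4

end JSRPaper

open JSRPaper in
/-- **Example 3.** For `A₁ = [[1,0],[0,-1]]`, `A₂ = [[0,λ],[λ,0]]` with `0 < |λ| < 1`,
the pair `𝒜 = (A₁, A₂)` is irreducible with `ϱ(𝒜) = 1`, has the unbounded agreements
and finiteness properties, the identity matrix lies in the limit semigroup so the rank
one property fails, every `ℓ^p`-norm (`p ≥ 1`) is a Barabanov norm, and `𝒜` has
non-proportional Barabanov norms. -/
theorem stmt_15 {𝕂 : Type*} [RCLike 𝕂] (lam : 𝕂) (h0 : 0 < ‖lam‖) (h1 : ‖lam‖ < 1)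
    (A : Fin 2 → Matrix (Fin 2) (Fin 2) 𝕂)
    (hA : A = ![!![1, 0; 0, -1], !![0, lam; lam, 0]]) :
    IsIrreducible A ∧
    jsr A = 1 ∧
    UnboundedAgreements A ∧
    FinitenessProp A ∧
    (1 : Matrix (Fin 2) (Fin 2) 𝕂) ∈ limitSemigroup A ∧
    ¬ RankOneProp A ∧
    (∀ p : ℝ, 1 ≤ p →
      IsBarabanov A (fun v : EuclideanSpace 𝕂 (Fin 2) => (‖v 0‖ ^ p + ‖v 1‖ ^ p) ^ p⁻¹)) ∧
    (∃ N₁ N₂ : EuclideanSpace 𝕂 (Fin 2) → ℝ, IsBarabanov A N₁ ∧ IsBarabanov A N₂ ∧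
      ¬ ∃ c > (0 : ℝ), ∀ v, N₂ v = c * N₁ v) := by
  have hlam : lam ≠ 0 := by
    intro h
    rw [h, norm_zero] at h0
    exact lt_irrefl 0 h0
  have hA0 : A 0 = !![1, 0; 0, -1] := by rw [hA]; rfl
  have hA1 : A 1 = !![0, lam; lam, 0] := by rw [hA]; rfl
  have hle : ∀ j, eNorm (A j) ≤ 1 := by
    intro j
    fin_cases j <;> simp [hA, eNorm_A0, eNorm_A1, h1.le]
  have hpow : ∀ n : ℕ, eNorm (A 0 ^ n) = 1 := fun n => by rw [hA0]; exact eNorm_A0_pow n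
  have hjsr : jsr A = 1 := jsr_eq_one' A hle hpow
  have hmemLS : (1 : Matrix (Fin 2) (Fin 2) 𝕂) ∈ limitSemigroup A := by
    intro m ε hε
    refine ⟨2 * m, by omega, fun _ => 0, ?_⟩
    rw [wordProd_const_zero, hA0, A0_even_pow, hjsr, one_pow, inv_one, one_smul, sub_self]
    have : eNorm (0 : Matrix (Fin 2) (Fin 2) 𝕂) = 0 := by
      unfold eNorm
      rw [map_zero, norm_zero]
    rw [this]
    exact hε
  refine ⟨irreducible_example lam hlam A hA, hjsr, ?_, ?_, hmemLS, ?_, ?_, ?_⟩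
  · -- UnboundedAgreements
    intro N i₁ i₂ hc1 hc2
    have conv : ∀ i : ℕ → Fin 2,
        (∃ c > (0 : ℝ), ∀ m : ℕ, ∃ n, m ≤ n ∧ c ≤ eNorm (seqProd A i n) / jsr A ^ n) →
        ∃ M : ℕ, ∀ k, M < k → i k = 0 := by
      intro i ⟨c, hc0, hcb⟩
      refine eventually_zero lam h1 A hA i ⟨c, hc0, fun m => ?_⟩
      obtain ⟨n, hn1, hn2⟩ := hcb m
      exact ⟨n, hn1, by rwa [hjsr, one_pow, div_one] at hn2⟩
    obtain ⟨M₁, hM₁⟩ := conv i₁ hc1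
    obtain ⟨M₂, hM₂⟩ := conv i₂ hc2
    exact ⟨M₁, M₂, fun k hk1 _ => by rw [hM₁ _ (by omega), hM₂ _ (by omega)]⟩
  · -- FinitenessProp
    refine ⟨1, one_pos, fun _ => 0, ?_⟩
    rw [show (fun _ : Fin 1 => (0 : Fin 2)) = (fun _ : Fin 1 => (0 : Fin 2)) from rfl,
      wordProd_const_zero, pow_one, hA0, specRad_A0, hjsr, Real.one_rpow]
  · -- ¬ RankOneProp
    rintro ⟨-, hrank⟩
    have hone_ne : (1 : Matrix (Fin 2) (Fin 2) 𝕂) ≠ 0 := by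
      intro h
      have h00 := congrFun (congrFun h 0) 0
      rw [Matrix.one_apply_eq, Matrix.zero_apply] at h00
      exact one_ne_zero h00
    have := hrank 1 hmemLS hone_ne
    rw [Matrix.rank_one] at this
    simp at this
  · -- ℓ^p Barabanov norms
    intro p hp
    exact isBarabanov_lpN lam h1.le A hA hjsr p hp
  · -- non-proportional Barabanov norms
    refine ⟨lpN 1, lpN 2, isBarabanov_lpN lam h1.le A hA hjsr 1 le_rfl,
      isBarabanov_lpN lam h1.le A hA hjsr 2 one_le_two, ?_⟩
    rintro ⟨c, hc0, hc⟩
    have hu := hc (ee0 (𝕂 := 𝕂))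
    have hv := hc (WithLp.toLp 2 (fun _ => 1) : EuclideanSpace 𝕂 (Fin 2))
    have he0 : (ee0 (𝕂 := 𝕂)) 0 = 1 := rfl
    have he1 : (ee0 (𝕂 := 𝕂)) 1 = 0 := rfl
    rw [show lpN 2 (ee0 (𝕂 := 𝕂)) = 1 by
        unfold lpN
        rw [he0, he1, norm_one, norm_zero, Real.one_rpow, Real.zero_rpow (by norm_num),
          add_zero, Real.one_rpow],
      show lpN 1 (ee0 (𝕂 := 𝕂)) = 1 by
        unfold lpN
        rw [he0, he1, norm_one, norm_zero, Real.one_rpow, Real.zero_rpow (by norm_num),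
          add_zero, Real.one_rpow],
      mul_one] at hu
    have hv2 : lpN 2 ((WithLp.toLp 2 (fun _ => 1) : EuclideanSpace 𝕂 (Fin 2))) = (2 : ℝ) ^ (2 : ℝ)⁻¹ := by
      unfold lpN
      rw [WithLp.ofLp_toLp, norm_one, Real.one_rpow]
      norm_num
    have hv1 : lpN 1 ((WithLp.toLp 2 (fun _ => 1) : EuclideanSpace 𝕂 (Fin 2))) = 2 := by
      unfold lpN
      rw [WithLp.ofLp_toLp, norm_one, Real.one_rpow]
      norm_num
    rw [hv2, hv1, ← hu, one_mul] at hv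
    have hlt : (2 : ℝ) ^ (2 : ℝ)⁻¹ < 2 := by
      calc (2 : ℝ) ^ (2 : ℝ)⁻¹ < (2 : ℝ) ^ (1 : ℝ) := by
            apply Real.rpow_lt_rpow_left_iff (by norm_num) |>.mpr
            norm_num
        _ = 2 := Real.rpow_one 2
    rw [hv] at hlt
    exact lt_irrefl _ hlt
end
end
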